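/- arXiv:1211.5455 — 4 statements merged into one kernel-verified Lean document; each statement's English description precedes it below -/
import Mathlib

section
/- For each integer r ≥ 3, let h_r(x) = −log(1−x)/(r x^{r−1}) for x ∈ (0,1), let α♯_r = inf_{x∈(0,1)} h_r(x), let x*_r be the unique solution in (0,1) of ψ_r(x) = 0 where ψ_r(x) = x + (1 − ((r−1)/r) x) log(1−x), and let ᾱ_r = h_r(x*_r) = −log(1 − x*_r)/(r (x*_r)^{r−1}). Then, as r → ∞: α♯_r → 0, and 1 − ᾱ_r ∼ e^{−r}; moreover x*_r = 1 − e^{−r} − r² e^{−2r} + O(r⁴ e^{−3r}). -/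
set_option maxHeartbeats 1000000

open Filter Topology Asymptotics

/-- `h_r(x) = -log(1-x) / (r x^(r-1))`. -/
noncomputable def hFix (r : ℕ) (x : ℝ) : ℝ :=
  -Real.log (1 - x) / ((r : ℝ) * x ^ (r - 1))

/-- `ψ_r(x) = x + (1 - ((r-1)/r) x) log(1-x)`. -/
noncomputable def psiFix (r : ℕ) (x : ℝ) : ℝ :=
  x + (1 - (((r : ℝ) - 1) / (r : ℝ)) * x) * Real.log (1 - x)

/-- `α♯_r = inf_{x ∈ (0,1)} h_r(x)`. -/
noncomputable def alphaSharpFix (r : ℕ) : ℝ := sInf (hFix r '' Set.Ioo 0 1)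

section Aux
open Real




lemma hFix_nonneg (r : ℕ) {x : ℝ} (hx : x ∈ Set.Ioo (0:ℝ) 1) : 0 ≤ hFix r x := by
  obtain ⟨h0, h1⟩ := hx
  apply div_nonneg
  · simp only [neg_nonneg]
    exact Real.log_nonpos (by linarith) (by linarith)
  · positivity

lemma alpha_nonneg (r : ℕ) : 0 ≤ alphaSharpFix r := by
  apply Real.sInf_nonneg
  rintro y ⟨x, hx, rfl⟩
  exact hFix_nonneg r hx

lemma alpha_upper {r : ℕ} (hr : 2 ≤ r) :
    alphaSharpFix r ≤ Real.exp 1 * Real.log r / r := by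
  have hr1 : (1:ℝ) ≤ r := by exact_mod_cast Nat.one_le_of_lt hr
  have hr2 : (2:ℝ) ≤ r := by exact_mod_cast hr
  have hx : (1 - 1/(r:ℝ)) ∈ Set.Ioo (0:ℝ) 1 := by
    constructor
    · have : 1/(r:ℝ) ≤ 1/2 := by
        apply div_le_div_of_nonneg_left <;> linarith
      linarith
    · have : 0 < 1/(r:ℝ) := by positivity
      linarith
  have hb : BddBelow (hFix r '' Set.Ioo 0 1) := by
    refine ⟨0, ?_⟩
    rintro y ⟨x, hx, rfl⟩
    exact hFix_nonneg r hx
  have hle : alphaSharpFix r ≤ hFix r (1 - 1/(r:ℝ)) :=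
    csInf_le hb ⟨_, hx, rfl⟩
  refine hle.trans ?_
  -- key: exp(-1) ≤ (1-1/r)^(r-1)
  have ht : (0:ℝ) < (r:ℝ) - 1 := by linarith
  have hkey : Real.exp (-1) ≤ (1 - 1/(r:ℝ)) ^ (r - 1) := by
    have h1 : 1 + 1/((r:ℝ)-1) ≤ Real.exp (1/((r:ℝ)-1)) := by
      have := Real.add_one_le_exp (1/((r:ℝ)-1)); linarith
    have h2 : Real.exp (-(1/((r:ℝ)-1))) ≤ 1 - 1/(r:ℝ) := by
      have hpos : (0:ℝ) < 1 - 1/(r:ℝ) := hx.1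
      have hid : (1 - 1/(r:ℝ)) * (1 + 1/((r:ℝ)-1)) = 1 := by
        field_simp
        ring
      have hmul := mul_le_mul_of_nonneg_left h1 hpos.le
      rw [hid] at hmul
      have hinv : (Real.exp (1/((r:ℝ)-1)))⁻¹ * Real.exp (1/((r:ℝ)-1)) = 1 :=
        inv_mul_cancel₀ (Real.exp_pos _).ne'
      rw [Real.exp_neg]
      nlinarith [Real.exp_pos (1/((r:ℝ)-1)), inv_nonneg.2 (Real.exp_pos (1/((r:ℝ)-1))).le]
    have h3 : Real.exp (-(1/((r:ℝ)-1))) ^ (r-1) ≤ (1 - 1/(r:ℝ)) ^ (r-1) :=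
      pow_le_pow_left₀ (Real.exp_pos _).le h2 _
    have h4 : Real.exp (-(1/((r:ℝ)-1))) ^ (r-1) = Real.exp (-1) := by
      rw [← Real.exp_nat_mul]
      congr 1
      have hc : ((r - 1 : ℕ) : ℝ) = (r:ℝ) - 1 := by
        have := Nat.one_le_of_lt hr
        push_cast [Nat.cast_sub this]; ring
      rw [hc]; field_simp
    rwa [h4] at h3
  have hval : hFix r (1 - 1/(r:ℝ)) = Real.log r / ((r:ℝ) * (1 - 1/(r:ℝ)) ^ (r-1)) := by
    unfold hFix
    congr 1
    rw [show (1:ℝ) - (1 - 1/(r:ℝ)) = 1/(r:ℝ) by ring]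
    rw [one_div, Real.log_inv]
    ring
  rw [hval]
  have hlogr : 0 ≤ Real.log r := Real.log_nonneg hr1
  have hd1 : (r:ℝ) * Real.exp (-1) ≤ (r:ℝ) * (1 - 1/(r:ℝ)) ^ (r-1) := by
    apply mul_le_mul_of_nonneg_left hkey (by linarith)
  have hd0 : (0:ℝ) < (r:ℝ) * Real.exp (-1) := by positivity
  calc Real.log r / ((r:ℝ) * (1 - 1/(r:ℝ)) ^ (r-1))
      ≤ Real.log r / ((r:ℝ) * Real.exp (-1)) := by
        apply div_le_div_of_nonneg_left hlogr hd0 hd1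
    _ = Real.exp 1 * Real.log r / r := by
        rw [Real.exp_neg]
        field_simp
  
lemma part1 : Tendsto (fun r : ℕ => alphaSharpFix r) atTop (𝓝 0) := by
  have hup : Tendsto (fun r : ℕ => Real.exp 1 * Real.log r / r) atTop (𝓝 0) := by
    have h : Tendsto (fun x : ℝ => Real.log x / x) atTop (𝓝 0) :=
      Real.isLittleO_log_id_atTop.tendsto_div_nhds_zero
    have h2 : Tendsto (fun r : ℕ => Real.log r / r) atTop (𝓝 0) :=
      h.comp tendsto_natCast_atTop_atTop
    have := h2.const_mul (Real.exp 1)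
    simpa [mul_div_assoc] using this
  refine tendsto_of_tendsto_of_tendsto_of_le_of_le' tendsto_const_nhds hup ?_ ?_
  · exact Eventually.of_forall alpha_nonneg
  · filter_upwards [eventually_ge_atTop 2] with r hr using alpha_upper hr



/-- factorization of psi at `x = 1 - ε` -/
lemma psi_factor (r : ℕ) (hr : 1 ≤ r) (ε : ℝ) (hden : (1 + ((r:ℝ)-1)*ε) ≠ 0) :
    psiFix r (1 - ε) = ((1 + ((r:ℝ)-1)*ε)/r) *
      (Real.log ε + (r:ℝ)*(1-ε)/(1 + ((r:ℝ)-1)*ε)) := by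
  have hr0 : (r:ℝ) ≠ 0 := by positivity
  unfold psiFix
  rw [show (1:ℝ) - (1 - ε) = ε by ring]
  have e1 : (1 + ((r:ℝ)-1)*ε)/r * ((r:ℝ)*(1-ε)/(1 + ((r:ℝ)-1)*ε)) = 1-ε := by
    rw [div_mul_div_comm, div_eq_iff (mul_ne_zero hr0 hden)]; ring
  have e2 : 1 - (((r:ℝ)-1)/r)*(1-ε) = (1 + ((r:ℝ)-1)*ε)/r := by
    rw [eq_div_iff hr0, mul_comm (((r:ℝ)-1)/r), sub_mul, mul_assoc, div_mul_cancel₀ _ hr0]; ring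
  rw [mul_add, e1, e2]; ring

/-- the G-identity -/
lemma G_id (r : ℝ) (E ε u : ℝ) (hE : E = Real.exp (-r)) (hεu : ε = E*(1+u))
    (hu : 0 < 1+u) (hden : (1 + (r-1)*ε) ≠ 0) :
    Real.log ε + r*(1-ε)/(1 + (r-1)*ε)
      = Real.log (1+u) - r^2*ε + r^2*(r-1)*ε^2/(1 + (r-1)*ε) := by
  have hE0 : 0 < E := by rw [hE]; exact Real.exp_pos _
  have hlog : Real.log ε = -r + Real.log (1+u) := by
    rw [hεu, Real.log_mul hE0.ne' hu.ne', hE, Real.log_exp]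
  rw [hlog]
  have e : r*(1-ε)/(1 + (r-1)*ε) - r^2*(r-1)*ε^2/(1 + (r-1)*ε) = r - r^2*ε := by
    rw [div_sub_div_same, div_eq_iff hden]; ring
  linarith

/-- log bound -/
lemma log_close {u : ℝ} (h0 : 0 ≤ u) (h1 : u ≤ 1/2) : |Real.log (1+u) - u| ≤ 2*u^2 := by
  have h := Real.abs_log_sub_add_sum_range_le (x := -u) (by rw [abs_neg, abs_of_nonneg h0]; linarith) 1
  simp only [Finset.sum_range_one, pow_one, Nat.cast_one] at h
  rw [show (1:ℝ) - -u = 1 + u by ring, abs_neg, abs_of_nonneg h0] at h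
  have : u^(1+1)/(1-u) ≤ 2*u^2 := by
    rw [div_le_iff₀ (by linarith)]
    have hq : u^(1+1) = u^2 := by norm_num
    rw [hq]
    nlinarith [mul_nonneg (sq_nonneg u) (by linarith : (0:ℝ) ≤ 1-2*u)]
  calc |Real.log (1+u) - u| = |-u/(0+1) + Real.log (1+u)| := by
        rw [show -u/(0+1) + Real.log (1+u) = Real.log (1+u) - u by ring]
    _ ≤ u^(1+1)/(1-u) := by convert h using 2; norm_num
    _ ≤ 2*u^2 := this


lemma smallE {r E : ℝ} (hr : 4 ≤ r) (hE : E = Real.exp (-r)) (hsm : 20*r^2*E ≤ 1) :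
    0 < E ∧ E ≤ 1/320 ∧ 10*r^4*E^2 ≤ r^2*E/2 ∧ 0 < r^2*E ∧ r^2*E ≤ 1/20 := by
  have hE0 : 0 < E := by rw [hE]; exact Real.exp_pos _
  have hr2 : (16:ℝ) ≤ r^2 := by nlinarith
  have hrE : 0 < r^2*E := mul_pos (by nlinarith) hE0
  refine ⟨hE0, by nlinarith, ?_, hrE, by linarith⟩
  have h2 : 10*r^4*E^2 = (r^2*E)*(10*r^2*E) := by ring
  have h3 : 10*r^2*E ≤ 1/2 := by linarith
  calc 10*r^4*E^2 = (r^2*E)*(10*r^2*E) := by ring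
    _ ≤ (r^2*E)*(1/2) := mul_le_mul_of_nonneg_left h3 hrE.le
    _ = r^2*E/2 := by ring

lemma G_pos {r E u ε : ℝ} (hr : 4 ≤ r) (hE : E = Real.exp (-r)) (hsm : 20*r^2*E ≤ 1)
    (hu : u = r^2*E + 10*r^4*E^2) (hε : ε = E*(1+u)) :
    0 < Real.log ε + r*(1-ε)/(1 + (r-1)*ε) := by
  obtain ⟨hE0, hEle, h10, hrE, hrE20⟩ := smallE hr hE hsm
  have hu0 : 0 ≤ u := by rw [hu]; positivity
  have huA : u ≤ 2*r^2*E := by rw [hu]; linarith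
  have hu12 : u ≤ 1/2 := by linarith
  have hε0 : 0 < ε := by rw [hε]; nlinarith
  have hden : 0 < 1 + (r-1)*ε := by
    linarith [mul_nonneg (by linarith : (0:ℝ) ≤ r-1) hε0.le]
  rw [G_id r E ε u hE hε (by linarith) hden.ne']
  have hlog := log_close hu0 hu12
  rw [abs_le] at hlog
  have hR : 0 ≤ r^2*(r-1)*ε^2/(1 + (r-1)*ε) :=
    div_nonneg (mul_nonneg (mul_nonneg (by positivity) (by linarith)) (sq_nonneg ε)) hden.le
  have hu2 : u^2 ≤ 4*r^4*E^2 := by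
    nlinarith [mul_le_mul huA huA hu0 (by positivity : (0:ℝ) ≤ 2*r^2*E)]
  have h6 : 10*r^6*E^3 ≤ r^4*E^2/2 := by
    have h3 : 10*r^2*E ≤ 1/2 := by linarith
    calc 10*r^6*E^3 = (r^4*E^2)*(10*r^2*E) := by ring
      _ ≤ (r^4*E^2)*(1/2) := mul_le_mul_of_nonneg_left h3 (by positivity)
      _ = r^4*E^2/2 := by ring
  have hkey : u - r^2*ε = 9*r^4*E^2 - 10*r^6*E^3 := by rw [hε, hu]; ring
  have hpos : 0 < r^4*E^2 := by positivity
  linarith [hlog.1]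

lemma G_neg {r E u ε : ℝ} (hr : 4 ≤ r) (hE : E = Real.exp (-r)) (hsm : 20*r^2*E ≤ 1)
    (hu : u = r^2*E - 10*r^4*E^2) (hε : ε = E*(1+u)) :
    Real.log ε + r*(1-ε)/(1 + (r-1)*ε) < 0 := by
  obtain ⟨hE0, hEle, h10, hrE, hrE20⟩ := smallE hr hE hsm
  have hu0 : 0 ≤ u := by rw [hu]; linarith
  have huA : u ≤ r^2*E := by rw [hu]; linarith [show (0:ℝ) ≤ 10*r^4*E^2 by positivity]
  have hu12 : u ≤ 1/2 := by linarith
  have hε0 : 0 < ε := by rw [hε]; nlinarith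
  have hε2E : ε ≤ 2*E := by
    rw [hε]
    nlinarith [mul_le_mul_of_nonneg_left (show u ≤ 1 by linarith) hE0.le]
  have hden : 0 < 1 + (r-1)*ε := by
    linarith [mul_nonneg (by linarith : (0:ℝ) ≤ r-1) hε0.le]
  rw [G_id r E ε u hE hε (by linarith) hden.ne']
  have hlog := log_close hu0 hu12
  rw [abs_le] at hlog
  have hdgeone : (1:ℝ) ≤ 1 + (r-1)*ε := by
    linarith [mul_nonneg (by linarith : (0:ℝ) ≤ r-1) hε0.le]
  have hRnum : 0 ≤ r^2*(r-1)*ε^2 :=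
    mul_nonneg (mul_nonneg (by positivity) (by linarith)) (sq_nonneg ε)
  have hR : r^2*(r-1)*ε^2/(1 + (r-1)*ε) ≤ r^2*(r-1)*ε^2 := div_le_self hRnum hdgeone
  have hε2 : ε^2 ≤ 4*E^2 := by nlinarith [hε0.le, hε2E]
  have hRb : r^2*(r-1)*ε^2 ≤ r^4*E^2 := by
    have h1 : r^2*(r-1) ≤ r^3 := by nlinarith [sq_nonneg r]
    have h2 : r^2*(r-1)*ε^2 ≤ r^3*ε^2 :=
      mul_le_mul_of_nonneg_right h1 (sq_nonneg ε)
    have h3 : r^3*ε^2 ≤ r^3*(4*E^2) :=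
      mul_le_mul_of_nonneg_left hε2 (by positivity)
    have h4 : 4*r^3 ≤ r^4 := by nlinarith [sq_nonneg r, sq_nonneg (r-4)]
    have h5 : r^3*(4*E^2) = (4*r^3)*E^2 := by ring
    have h6 : (4*r^3)*E^2 ≤ r^4*E^2 := mul_le_mul_of_nonneg_right h4 (sq_nonneg E)
    linarith
  have hu2 : u^2 ≤ r^4*E^2 := by
    nlinarith [mul_le_mul huA huA hu0 hrE.le]
  have hkey : u - r^2*ε = -10*r^4*E^2 - r^2*E*u := by rw [hε, hu]; ring
  have hEu : 0 ≤ r^2*E*u := mul_nonneg hrE.le hu0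
  have hpos : 0 < r^4*E^2 := by positivity
  linarith [hlog.2]

lemma bracket (xs : ℕ → ℝ)
    (hroot : ∀ r : ℕ, 3 ≤ r → xs r ∈ Set.Ioo (0 : ℝ) 1 ∧ psiFix r (xs r) = 0 ∧
      ∀ y ∈ Set.Ioo (0 : ℝ) 1, psiFix r y = 0 → y = xs r) :
    ∀ᶠ r : ℕ in atTop,
      Real.exp (-(r:ℝ))*(1 + ((r:ℝ)^2*Real.exp (-(r:ℝ)) - 10*(r:ℝ)^4*Real.exp (-(r:ℝ))^2))
        ≤ 1 - xs r ∧
      1 - xs r ≤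
      Real.exp (-(r:ℝ))*(1 + ((r:ℝ)^2*Real.exp (-(r:ℝ)) + 10*(r:ℝ)^4*Real.exp (-(r:ℝ))^2)) := by
  have hts : Tendsto (fun n:ℕ => ((n:ℝ))^2*Real.exp (-(n:ℝ))) atTop (𝓝 0) :=
    (tendsto_pow_mul_exp_neg_atTop_nhds_zero 2).comp tendsto_natCast_atTop_atTop
  have hev := hts.eventually (gt_mem_nhds (show (0:ℝ) < 1/20 by norm_num))
  filter_upwards [hev, eventually_ge_atTop 4] with r hsm' hr4
  have hr4' : (4:ℝ) ≤ (r:ℝ) := by exact_mod_cast hr4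
  set E := Real.exp (-(r:ℝ)) with hE
  have hsm : 20*(r:ℝ)^2*E ≤ 1 := by
    have : (r:ℝ)^2*E < 1/20 := hsm'
    linarith
  obtain ⟨hE0, hEle, h10, hrE, hrE20⟩ := smallE hr4' hE hsm
  set up := (r:ℝ)^2*E + 10*(r:ℝ)^4*E^2 with hup
  set um := (r:ℝ)^2*E - 10*(r:ℝ)^4*E^2 with hum
  set ep := E*(1+up) with hep
  set em := E*(1+um) with hem
  have hGp := G_pos hr4' hE hsm hup hep
  have hGm := G_neg hr4' hE hsm hum hem
  have hum0 : 0 ≤ um := by rw [hum]; linarith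
  have hup0 : 0 ≤ up := by rw [hup]; positivity
  have hupA : up ≤ 2*(r:ℝ)^2*E := by rw [hup]; linarith
  have hup1 : up ≤ 1 := by linarith
  have hmp : um ≤ up := by rw [hum, hup]; linarith [show (0:ℝ) ≤ 10*(r:ℝ)^4*E^2 by positivity]
  have hem0 : 0 < em := by rw [hem]; nlinarith
  have hemp : em ≤ ep := by
    rw [hem, hep]; exact mul_le_mul_of_nonneg_left (by linarith) hE0.le
  have hep2E : ep ≤ 2*E := by
    rw [hep]; nlinarith
  have hep1 : ep < 1 := by linarith
  have hdenp : 0 < 1 + ((r:ℝ)-1)*ep := by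
    have hep0 : 0 < ep := lt_of_lt_of_le hem0 hemp
    linarith [mul_nonneg (by linarith : (0:ℝ) ≤ (r:ℝ)-1) hep0.le]
  have hdenm : 0 < 1 + ((r:ℝ)-1)*em := by
    linarith [mul_nonneg (by linarith : (0:ℝ) ≤ (r:ℝ)-1) hem0.le]
  have hr3 : 3 ≤ r := by omega
  have hpsia : 0 < psiFix r (1 - ep) := by
    rw [psi_factor r (by omega) ep hdenp.ne']
    exact mul_pos (div_pos hdenp (by linarith)) hGp
  have hpsib : psiFix r (1 - em) < 0 := by
    rw [psi_factor r (by omega) em hdenm.ne']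
    exact mul_neg_of_pos_of_neg (div_pos hdenm (by linarith)) hGm
  have hab : 1 - ep ≤ 1 - em := by linarith
  have cont : ContinuousOn (psiFix r) (Set.Icc (1-ep) (1-em)) := by
    show ContinuousOn (fun x : ℝ => x + (1 - (((r:ℝ)-1)/(r:ℝ))*x)*Real.log (1-x)) _
    apply ContinuousOn.add continuousOn_id
    apply ContinuousOn.mul
    · exact continuousOn_const.sub (continuousOn_const.mul continuousOn_id)
    · apply ContinuousOn.log (continuousOn_const.sub continuousOn_id)
      intro x hx
      have hx2 : x ≤ 1 - em := hx.2
      have : 0 < 1 - x := by linarith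
      exact this.ne'
  have hiv := intermediate_value_Icc' hab cont
  have h0mem : (0:ℝ) ∈ Set.Icc (psiFix r (1-em)) (psiFix r (1-ep)) := ⟨hpsib.le, hpsia.le⟩
  obtain ⟨c, hc, hc0⟩ := hiv h0mem
  have hcIoo : c ∈ Set.Ioo (0:ℝ) 1 := ⟨by linarith [hc.1], by linarith [hc.2]⟩
  have hcx := (hroot r hr3).2.2 c hcIoo hc0
  rw [← hcx]
  exact ⟨by linarith [hc.2], by linarith [hc.1]⟩

lemma pow_upper (n : ℕ) {ε : ℝ} (h0 : 0 ≤ ε) (h1 : ε ≤ 1) :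
    (1-ε)^n ≤ 1 - n*ε + n^2*ε^2 := by
  induction n with
  | zero => simp
  | succ n ih =>
    have hb : (0:ℝ) ≤ 1 - ε := by linarith
    have : (1-ε)^(n+1) = (1-ε)^n * (1-ε) := pow_succ _ _
    rw [this]
    have h2 : (1-ε)^n * (1-ε) ≤ (1 - n*ε + n^2*ε^2) * (1-ε) :=
      mul_le_mul_of_nonneg_right ih hb
    have h3 : (1 - n*ε + n^2*ε^2) * (1-ε) ≤ 1 - (n+1)*ε + ((n:ℝ)+1)^2*ε^2 := by
      nlinarith [sq_nonneg ε, mul_nonneg (mul_nonneg (sq_nonneg (n:ℝ)) (sq_nonneg ε)) h0, sq_nonneg ((n:ℝ)*ε)]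
    push_cast
    push_cast at h2 h3
    linarith

lemma D_bounds {rr E ε : ℝ} {n : ℕ} (hn : (n:ℝ) = rr - 2) (hr : 4 ≤ rr)
    (hE : 0 < E) (hE1 : E ≤ 1/320) (hsm : 20*rr^2*E ≤ 1)
    (hε1 : E ≤ ε) (hε2 : ε ≤ E + 2*rr^2*E^2) :
    (1 - 2*rr*E ≤ (1+(rr-1)*ε)*(1-ε)^n ∧ (1+(rr-1)*ε)*(1-ε)^n ≤ 1 + 2*rr*E) ∧
    E - 4*rr^2*E^2 ≤ (1+(rr-1)*ε)*(1-ε)^n - 1 ∧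
    (1+(rr-1)*ε)*(1-ε)^n - 1 ≤ E + 14*rr^4*E^2 := by
  have hε0 : 0 < ε := lt_of_lt_of_le hE hε1
  have hrE : rr^2*E ≤ 1/20 := by linarith
  have hrr0 : (0:ℝ) < rr := by linarith
  have hr2 : (16:ℝ) ≤ rr^2 := by nlinarith
  have h2E : 2*rr^2*E^2 ≤ E := by nlinarith
  have hε2E : ε ≤ 2*E := by linarith
  have hε1' : ε ≤ 1 := by linarith
  have hsq : ε^2 ≤ 4*E^2 := by nlinarith
  have hcube : ε^3 ≤ 8*E^3 := by nlinarith [sq_nonneg ε, mul_le_mul hsq hε2E hε0.le (by positivity : (0:ℝ) ≤ 4*E^2)]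
  have hrεsm : rr*ε ≤ 2*rr*E := by nlinarith
  have h2rE : 2*rr*E ≤ 1/2 := by nlinarith
  have hfac : (0:ℝ) ≤ 1 + (rr-1)*ε := by
    nlinarith [mul_nonneg (by linarith : (0:ℝ) ≤ rr-1) hε0.le]
  have hP0 : (0:ℝ) ≤ (1-ε)^n := pow_nonneg (by linarith) n
  have hP1 : (1-ε)^n ≤ 1 := pow_le_one₀ (by linarith) (by linarith)
  have hPl : 1 - (n:ℝ)*ε ≤ (1-ε)^n := by
    have := one_add_mul_le_pow (show (-2:ℝ) ≤ -ε by linarith) n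
    calc 1 - (n:ℝ)*ε = 1 + n*(-ε) := by ring
      _ ≤ (1 + -ε)^n := this
      _ = (1-ε)^n := by ring_nf
  have hPu : (1-ε)^n ≤ 1 - n*ε + n^2*ε^2 := pow_upper n hε0.le hε1'
  -- D bounds
  have hDle : (1+(rr-1)*ε)*(1-ε)^n ≤ 1+(rr-1)*ε := by
    have := mul_le_mul_of_nonneg_left hP1 hfac
    linarith
  have hDge : (1-ε)^n ≤ (1+(rr-1)*ε)*(1-ε)^n := by
    have hge1 : (1:ℝ) ≤ 1+(rr-1)*ε := by
      linarith [mul_nonneg (by linarith : (0:ℝ) ≤ rr-1) hε0.le]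
    have := mul_le_mul_of_nonneg_right hge1 hP0
    linarith
  constructor
  · constructor
    · have hstep : 1 - (n:ℝ)*ε ≥ 1 - 2*rr*E := by
        rw [hn]
        linarith [hrεsm, hε0.le]
      linarith [hDge, hPl]
    · linarith [hDle, hrεsm, hε0.le]
  -- D - 1 bounds
  constructor
  · have hmul := mul_le_mul_of_nonneg_left hPl hfac
    have hid : (1+(rr-1)*ε)*(1-(n:ℝ)*ε) = 1 + ε - (rr-1)*(rr-2)*ε^2 := by
      rw [hn]; ring
    have h1 : (rr-1)*(rr-2) ≤ rr^2 := by nlinarith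
    have h3 : (rr-1)*(rr-2)*ε^2 ≤ rr^2*(4*E^2) :=
      mul_le_mul h1 hsq (sq_nonneg ε) (by positivity)
    rw [hid] at hmul
    nlinarith [hmul, h3, hε1]
  · have hmul := mul_le_mul_of_nonneg_left hPu hfac
    have hid : (1+(rr-1)*ε)*(1-(n:ℝ)*ε+(n:ℝ)^2*ε^2)
        = 1 + ε - (rr-1)*(rr-2)*ε^2 + (rr-2)^2*ε^2 + (rr-1)*(rr-2)^2*ε^3 := by
      rw [hn]; ring
    have ht1 : 0 ≤ (rr-1)*(rr-2)*ε^2 :=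
      mul_nonneg (mul_nonneg (by linarith) (by linarith)) (sq_nonneg ε)
    have ht2 : (rr-2)^2*ε^2 ≤ rr^2*(4*E^2) :=
      mul_le_mul (by nlinarith) hsq (sq_nonneg ε) (by positivity)
    have ht3 : (rr-1)*(rr-2)^2*ε^3 ≤ rr^3*(8*E^3) := by
      apply mul_le_mul (by nlinarith) hcube (by positivity) (by positivity)
    have h24 : rr^2 ≤ rr^4 := by
      nlinarith [mul_nonneg (sq_nonneg rr) (show (0:ℝ) ≤ rr^2 - 1 by nlinarith)]
    have h34 : rr^3 ≤ rr^4 := by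
      nlinarith [mul_nonneg (mul_nonneg hrr0.le (mul_nonneg hrr0.le hrr0.le)) (show (0:ℝ) ≤ rr - 1 by linarith)]
    have hc1 : rr^2*(4*E^2) ≤ 4*rr^4*E^2 := by
      have := mul_le_mul_of_nonneg_right h24 (show (0:ℝ) ≤ 4*E^2 by positivity)
      linarith
    have hc2 : rr^3*(8*E^3) ≤ 8*rr^4*E^2 := by
      have hE32 : E^3 ≤ E^2 := by nlinarith [sq_nonneg E]
      have s1 : rr^3*E^3 ≤ rr^3*E^2 := mul_le_mul_of_nonneg_left hE32 (pow_pos hrr0 3).le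
      have s2 : rr^3*E^2 ≤ rr^4*E^2 := mul_le_mul_of_nonneg_right h34 (sq_nonneg E)
      linarith
    have hc3 : 2*rr^2*E^2 ≤ 2*rr^4*E^2 := by
      have := mul_le_mul_of_nonneg_right h24 (show (0:ℝ) ≤ 2*E^2 by positivity)
      linarith
    rw [hid] at hmul
    linarith [hmul, ht1, ht2, ht3, hc1, hc2, hc3, hε2]


lemma hFix_at_root {r : ℕ} (hr : 3 ≤ r) {x : ℝ} (hx0 : 0 < x) (hx1 : x < 1)
    (hpsi : psiFix r x = 0) :
    hFix r x = 1/((1 + ((r:ℝ)-1)*(1-x)) * x^(r-2)) := by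
  have hrR : (3:ℝ) ≤ (r:ℝ) := by exact_mod_cast hr
  have hr0 : (0:ℝ) < r := by linarith
  have hcx : 0 < 1 - (((r:ℝ)-1)/r)*x := by
    have h1 : (((r:ℝ)-1)/r)*x < 1 := by
      have h2 : ((r:ℝ)-1)/r < 1 := by rw [div_lt_one hr0]; linarith
      nlinarith [div_nonneg (by linarith : (0:ℝ) ≤ (r:ℝ)-1) hr0.le]
    linarith
  have hlog : Real.log (1-x) = -x/(1 - (((r:ℝ)-1)/r)*x) := by
    unfold psiFix at hpsi
    rw [eq_div_iff hcx.ne']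
    linarith [hpsi, mul_comm (Real.log (1-x)) (1 - (((r:ℝ)-1)/r)*x)]
  unfold hFix
  rw [hlog]
  have hpow : x^(r-1) = x^(r-2)*x := by
    rw [← pow_succ]
    congr 1
    omega
  rw [hpow]
  have hd2 : (0:ℝ) < 1 + ((r:ℝ)-1)*(1-x) := by nlinarith
  have hxp : x^(r-2) ≠ 0 := pow_ne_zero _ hx0.ne'
  have hden1 : (0:ℝ) < (r:ℝ) * (x^(r-2)*x) :=
    mul_pos hr0 (mul_pos (pow_pos hx0 _) hx0)
  have hden2 : (0:ℝ) < (1 + ((r:ℝ)-1)*(1-x)) * x^(r-2) := mul_pos hd2 (pow_pos hx0 _)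
  rw [div_eq_div_iff hden1.ne' hden2.ne', neg_div, neg_neg, div_mul_eq_mul_div,
    div_eq_iff hcx.ne']
  field_simp
  ring

lemma htk (k : ℕ) : Tendsto (fun r:ℕ => (r:ℝ)^k*Real.exp (-(r:ℝ))) atTop (𝓝 0) :=
  (tendsto_pow_mul_exp_neg_atTop_nhds_zero k).comp tendsto_natCast_atTop_atTop

lemma part2 (xs : ℕ → ℝ)
    (hroot : ∀ r : ℕ, 3 ≤ r → xs r ∈ Set.Ioo (0 : ℝ) 1 ∧ psiFix r (xs r) = 0 ∧
      ∀ y ∈ Set.Ioo (0 : ℝ) 1, psiFix r y = 0 → y = xs r) :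
    (fun r : ℕ => 1 - hFix r (xs r)) ~[atTop] (fun r : ℕ => Real.exp (-(r:ℝ))) := by
  rw [Asymptotics.isEquivalent_iff_tendsto_one
    (Eventually.of_forall fun r => (Real.exp_pos _).ne')]
  set D : ℕ → ℝ := fun r => (1 + ((r:ℝ)-1)*(1 - xs r)) * (xs r)^(r-2) with hD
  -- eventual package of the D bounds
  have hts : Tendsto (fun n:ℕ => ((n:ℝ))^2*Real.exp (-(n:ℝ))) atTop (𝓝 0) := htk 2
  have hev2 := hts.eventually (gt_mem_nhds (show (0:ℝ) < 1/20 by norm_num))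
  have hpack : ∀ᶠ r:ℕ in atTop,
      (1 - 2*(r:ℝ)*Real.exp (-(r:ℝ)) ≤ D r ∧ D r ≤ 1 + 2*(r:ℝ)*Real.exp (-(r:ℝ))) ∧
      (Real.exp (-(r:ℝ)) - 4*(r:ℝ)^2*Real.exp (-(r:ℝ))^2 ≤ D r - 1 ∧
        D r - 1 ≤ Real.exp (-(r:ℝ)) + 14*(r:ℝ)^4*Real.exp (-(r:ℝ))^2) := by
    filter_upwards [bracket xs hroot, hev2, eventually_ge_atTop 4] with r hbr hsm' hr4
    have hr4' : (4:ℝ) ≤ (r:ℝ) := by exact_mod_cast hr4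
    set E := Real.exp (-(r:ℝ)) with hE
    have hsm : 20*(r:ℝ)^2*E ≤ 1 := by
      have : (r:ℝ)^2*E < 1/20 := hsm'
      linarith
    obtain ⟨hE0, hEle, h10, hrE, hrE20⟩ := smallE hr4' hE hsm
    have hn : (((r-2:ℕ)):ℝ) = (r:ℝ) - 2 := by
      have : 2 ≤ r := by omega
      push_cast [Nat.cast_sub this]
      ring
    have hε1 : E ≤ 1 - xs r := by
      have h := hbr.1
      nlinarith [mul_nonneg hE0.le (show (0:ℝ) ≤ (r:ℝ)^2*E - 10*(r:ℝ)^4*E^2 by linarith)]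
    have hε2 : 1 - xs r ≤ E + 2*(r:ℝ)^2*E^2 := by
      have h := hbr.2
      nlinarith [hE0]
    have hDB := D_bounds hn hr4' hE0 hEle hsm hε1 hε2
    have hxx : (1:ℝ) - (1 - xs r) = xs r := by ring
    rw [hxx] at hDB
    exact ⟨hDB.1, hDB.2⟩
  have hDtend : Tendsto D atTop (𝓝 1) := by
    have hl : Tendsto (fun r:ℕ => 1 - 2*(r:ℝ)*Real.exp (-(r:ℝ))) atTop (𝓝 1) := by
      have h1 : Tendsto (fun r:ℕ => (r:ℝ)*Real.exp (-(r:ℝ))) atTop (𝓝 0) := by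
        have := htk 1
        simpa using this
      have := (h1.const_mul 2)
      have h2 : Tendsto (fun r:ℕ => 2*((r:ℝ)*Real.exp (-(r:ℝ)))) atTop (𝓝 0) := by simpa using this
      have := tendsto_const_nhds.sub h2 (f := fun _:ℕ => (1:ℝ))
      simpa [mul_assoc] using this
    have hu : Tendsto (fun r:ℕ => 1 + 2*(r:ℝ)*Real.exp (-(r:ℝ))) atTop (𝓝 1) := by
      have h1 : Tendsto (fun r:ℕ => (r:ℝ)*Real.exp (-(r:ℝ))) atTop (𝓝 0) := by
        have := htk 1
        simpa using this
      have h2 : Tendsto (fun r:ℕ => 2*((r:ℝ)*Real.exp (-(r:ℝ)))) atTop (𝓝 0) := by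
        simpa using h1.const_mul 2
      have := tendsto_const_nhds.add h2 (f := fun _:ℕ => (1:ℝ))
      simpa [mul_assoc] using this
    refine tendsto_of_tendsto_of_tendsto_of_le_of_le' hl hu ?_ ?_
    · filter_upwards [hpack] with r h using h.1.1
    · filter_upwards [hpack] with r h using h.1.2
  have hNtend : Tendsto (fun r:ℕ => (D r - 1) * Real.exp (r:ℝ)) atTop (𝓝 1) := by
    have hl : Tendsto (fun r:ℕ => 1 - 4*(r:ℝ)^2*Real.exp (-(r:ℝ))) atTop (𝓝 1) := by
      have h2 : Tendsto (fun r:ℕ => 4*((r:ℝ)^2*Real.exp (-(r:ℝ)))) atTop (𝓝 0) := by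
        simpa using (htk 2).const_mul 4
      have := tendsto_const_nhds.sub h2 (f := fun _:ℕ => (1:ℝ))
      simpa [mul_assoc] using this
    have hu : Tendsto (fun r:ℕ => 1 + 14*(r:ℝ)^4*Real.exp (-(r:ℝ))) atTop (𝓝 1) := by
      have h2 : Tendsto (fun r:ℕ => 14*((r:ℝ)^4*Real.exp (-(r:ℝ)))) atTop (𝓝 0) := by
        simpa using (htk 4).const_mul 14
      have := tendsto_const_nhds.add h2 (f := fun _:ℕ => (1:ℝ))
      simpa [mul_assoc] using this
    refine tendsto_of_tendsto_of_tendsto_of_le_of_le' hl hu ?_ ?_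
    · filter_upwards [hpack] with r h
      have hEe : Real.exp (-(r:ℝ)) * Real.exp (r:ℝ) = 1 := by
        rw [← Real.exp_add]; simp
      have h1 := h.2.1
      have h3 := mul_le_mul_of_nonneg_right h1 (Real.exp_pos (r:ℝ)).le
      have h4 : (Real.exp (-(r:ℝ)) - 4*(r:ℝ)^2*Real.exp (-(r:ℝ))^2) * Real.exp (r:ℝ)
          = 1 - 4*(r:ℝ)^2*Real.exp (-(r:ℝ)) := by
        linear_combination (1 - 4*(r:ℝ)^2*Real.exp (-(r:ℝ))) * hEe
      linarith
    · filter_upwards [hpack] with r h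
      have hEe : Real.exp (-(r:ℝ)) * Real.exp (r:ℝ) = 1 := by
        rw [← Real.exp_add]; simp
      have h1 := h.2.2
      have h3 := mul_le_mul_of_nonneg_right h1 (Real.exp_pos (r:ℝ)).le
      have h4 : (Real.exp (-(r:ℝ)) + 14*(r:ℝ)^4*Real.exp (-(r:ℝ))^2) * Real.exp (r:ℝ)
          = 1 + 14*(r:ℝ)^4*Real.exp (-(r:ℝ)) := by
        linear_combination (1 + 14*(r:ℝ)^4*Real.exp (-(r:ℝ))) * hEe
      linarith
  have hq : Tendsto (fun r:ℕ => ((D r - 1) * Real.exp (r:ℝ)) / D r) atTop (𝓝 1) := by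
    have := hNtend.div hDtend one_ne_zero
    simpa [Pi.div_def] using this
  apply hq.congr'
  have hrEsmall := (htk 1).eventually (gt_mem_nhds (show (0:ℝ) < 1/8 by norm_num))
  filter_upwards [hpack, eventually_ge_atTop 4, hrEsmall] with r h hr4 hsm1
  have hr3 : 3 ≤ r := by omega
  obtain ⟨hIoo, hpsi, _⟩ := hroot r hr3
  have hDpos : 0 < D r := by
    have h1 := h.1.1
    have : (r:ℝ)^1*Real.exp (-(r:ℝ)) < 1/8 := hsm1
    rw [pow_one] at this
    linarith
  have hform : hFix r (xs r) = 1/(D r) := hFix_at_root hr3 hIoo.1 hIoo.2 hpsi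
  simp only [Pi.div_apply]
  rw [hform, Real.exp_neg]
  rw [div_inv_eq_mul]
  field_simp [hDpos.ne']

lemma part3 (xs : ℕ → ℝ)
    (hroot : ∀ r : ℕ, 3 ≤ r → xs r ∈ Set.Ioo (0 : ℝ) 1 ∧ psiFix r (xs r) = 0 ∧
      ∀ y ∈ Set.Ioo (0 : ℝ) 1, psiFix r y = 0 → y = xs r) :
    (fun r : ℕ => xs r -
        (1 - Real.exp (-(r : ℝ)) - (r : ℝ) ^ 2 * Real.exp (-2 * (r : ℝ)))) =O[atTop]
      (fun r : ℕ => (r : ℝ) ^ 4 * Real.exp (-3 * (r : ℝ))) := by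
  rw [Asymptotics.isBigO_iff]
  refine ⟨10, ?_⟩
  filter_upwards [bracket xs hroot] with r h
  set E := Real.exp (-(r:ℝ)) with hE
  have hE0 : 0 < E := Real.exp_pos _
  have he2 : Real.exp (-2*(r:ℝ)) = E^2 := by
    rw [hE, sq, ← Real.exp_add]; ring_nf
  have he3 : Real.exp (-3*(r:ℝ)) = E^3 := by
    rw [hE, pow_succ, sq, ← Real.exp_add, ← Real.exp_add]; ring_nf
  rw [he2, he3, Real.norm_eq_abs, Real.norm_eq_abs]
  have hrhs : |(r:ℝ)^4 * E^3| = (r:ℝ)^4*E^3 := abs_of_nonneg (by positivity)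
  rw [hrhs, abs_le]
  constructor <;> nlinarith [h.1, h.2]

end Aux

theorem stmt15 (xs : ℕ → ℝ)
    (hroot : ∀ r : ℕ, 3 ≤ r → xs r ∈ Set.Ioo (0 : ℝ) 1 ∧ psiFix r (xs r) = 0 ∧
      ∀ y ∈ Set.Ioo (0 : ℝ) 1, psiFix r y = 0 → y = xs r) :
    Filter.Tendsto (fun r : ℕ => alphaSharpFix r) atTop (𝓝 0) ∧
    (fun r : ℕ => 1 - hFix r (xs r)) ~[atTop] (fun r : ℕ => Real.exp (-(r : ℝ))) ∧
    (fun r : ℕ => xs r -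
        (1 - Real.exp (-(r : ℝ)) - (r : ℝ) ^ 2 * Real.exp (-2 * (r : ℝ)))) =O[atTop]
      (fun r : ℕ => (r : ℝ) ^ 4 * Real.exp (-3 * (r : ℝ))) := by
  exact ⟨part1, part2 xs hroot, part3 xs hroot⟩
end

section
/- Let r ≥ 3 be an integer and define ψ_r(x) = x + (1 − ((r−1)/r) x) log(1−x) for x ∈ (0,1). Then ψ_r has exactly one root in (0,1), and this root lies in the interval ((r−2)/(r−1), 1); moreover ψ_r(x) > 0 for x ∈ (0, x*_r) and ψ_r(x) < 0 for x ∈ (x*_r, 1), where x*_r denotes the root. -/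
/-- First derivative of `psiFix`. -/
noncomputable def psiD (r : ℕ) (x : ℝ) : ℝ :=
  1 - (((r : ℝ) - 1) / (r : ℝ)) * Real.log (1 - x)
    - (1 - (((r : ℝ) - 1) / (r : ℝ)) * x) / (1 - x)

/-- Second derivative of `psiFix`. -/
noncomputable def psiDD (r : ℕ) (x : ℝ) : ℝ :=
  (((r : ℝ) - 2) - ((r : ℝ) - 1) * x) / ((r : ℝ) * (1 - x) ^ 2)

lemma psiFix_hasDerivAt (r : ℕ) (hr : 3 ≤ r) {x : ℝ} (hx : x < 1) :
    HasDerivAt (psiFix r) (psiD r x) x := by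
  have hR : (3:ℝ) ≤ (r:ℝ) := by exact_mod_cast hr
  have h1 : (1:ℝ) - x ≠ 0 := by linarith
  have hg : HasDerivAt (fun y : ℝ => 1 - y) (-1) x := by
    simpa using (hasDerivAt_id' x).const_sub (1:ℝ)
  have hlog : HasDerivAt (fun y : ℝ => Real.log (1 - y)) ((1 - x)⁻¹ * (-1)) x :=
    (Real.hasDerivAt_log h1).comp x hg
  have hlin : HasDerivAt (fun y : ℝ => 1 - (((r:ℝ)-1)/(r:ℝ)) * y) (-((((r:ℝ)-1)/(r:ℝ)))) x := by
    simpa using ((hasDerivAt_id' x).const_mul (((r:ℝ)-1)/(r:ℝ))).const_sub (1:ℝ)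
  have h := (hasDerivAt_id x).add (hlin.mul hlog)
  refine h.congr_deriv ?_
  unfold psiD
  rw [div_eq_mul_inv]
  ring

lemma psiD_hasDerivAt (r : ℕ) (hr : 3 ≤ r) {x : ℝ} (hx : x < 1) :
    HasDerivAt (psiD r) (psiDD r x) x := by
  have hR : (3:ℝ) ≤ (r:ℝ) := by exact_mod_cast hr
  have h1 : (1:ℝ) - x ≠ 0 := by linarith
  have hr0 : (r:ℝ) ≠ 0 := by linarith
  have hg : HasDerivAt (fun y : ℝ => 1 - y) (-1) x := by
    simpa using (hasDerivAt_id' x).const_sub (1:ℝ)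
  have hlog : HasDerivAt (fun y : ℝ => Real.log (1 - y)) ((1 - x)⁻¹ * (-1)) x :=
    (Real.hasDerivAt_log h1).comp x hg
  have hlin : HasDerivAt (fun y : ℝ => 1 - (((r:ℝ)-1)/(r:ℝ)) * y) (-((((r:ℝ)-1)/(r:ℝ)))) x := by
    simpa using ((hasDerivAt_id' x).const_mul (((r:ℝ)-1)/(r:ℝ))).const_sub (1:ℝ)
  have h := ((hasDerivAt_const x (1:ℝ)).sub
      (hlog.const_mul (((r:ℝ)-1)/(r:ℝ)))).sub (hlin.div hg h1)
  refine h.congr_deriv ?_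
  unfold psiDD
  field_simp
  ring

lemma psiFix_zero (r : ℕ) : psiFix r 0 = 0 := by simp [psiFix]

lemma psiD_zero (r : ℕ) : psiD r 0 = 0 := by simp [psiD]

theorem stmt16 (r : ℕ) (hr : 3 ≤ r) :
    ∃ x ∈ Set.Ioo (0 : ℝ) 1, psiFix r x = 0 ∧
      (∀ y ∈ Set.Ioo (0 : ℝ) 1, psiFix r y = 0 → y = x) ∧
      ((r : ℝ) - 2) / ((r : ℝ) - 1) < x ∧
      (∀ y : ℝ, 0 < y → y < x → 0 < psiFix r y) ∧
      (∀ y : ℝ, x < y → y < 1 → psiFix r y < 0) := by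
  have hR : (3:ℝ) ≤ (r:ℝ) := by exact_mod_cast hr
  set R : ℝ := (r:ℝ) with hRdef
  have hR0 : (0:ℝ) < R := by linarith
  set m : ℝ := (R - 2) / (R - 1) with hm
  have hm0 : 0 < m := div_pos (by linarith) (by linarith)
  have hm1 : m < 1 := by
    rw [hm, div_lt_one (by linarith)]; linarith
  -- basic continuity / derivative facts
  have hcontAt : ∀ x : ℝ, x < 1 → ContinuousAt (psiFix r) x := fun x hx =>
    (psiFix_hasDerivAt r hr hx).continuousAt
  have hcontD : ∀ x : ℝ, x < 1 → ContinuousAt (psiD r) x := fun x hx =>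
    (psiD_hasDerivAt r hr hx).continuousAt
  have hderiv : ∀ x : ℝ, x < 1 → deriv (psiFix r) x = psiD r x := fun x hx =>
    (psiFix_hasDerivAt r hr hx).deriv
  have hderivD : ∀ x : ℝ, x < 1 → deriv (psiD r) x = psiDD r x := fun x hx =>
    (psiD_hasDerivAt r hr hx).deriv
  -- sign of second derivative
  have hDDpos : ∀ x : ℝ, 0 ≤ x → x < m → 0 < psiDD r x := by
    intro x hx0 hxm
    have hx1 : x < 1 := lt_trans hxm hm1
    have hnum : 0 < (R - 2) - (R - 1) * x := by
      rw [hm, lt_div_iff₀ (by linarith : (0:ℝ) < R - 1)] at hxm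
      nlinarith
    exact div_pos hnum (mul_pos hR0 (pow_pos (by linarith) 2))
  have hDDneg : ∀ x : ℝ, m < x → x < 1 → psiDD r x < 0 := by
    intro x hxm hx1
    have hnum : (R - 2) - (R - 1) * x < 0 := by
      rw [hm, div_lt_iff₀ (by linarith : (0:ℝ) < R - 1)] at hxm
      nlinarith
    exact div_neg_of_neg_of_pos hnum (mul_pos hR0 (pow_pos (by linarith) 2))
  -- psiD > 0 on (0, m]
  have hDmono : StrictMonoOn (psiD r) (Set.Icc 0 m) := by
    apply strictMonoOn_of_deriv_pos (convex_Icc 0 m)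
    · exact fun x hx => (hcontD x (lt_of_le_of_lt hx.2 hm1)).continuousWithinAt
    · intro x hx
      rw [interior_Icc] at hx
      rw [hderivD x (lt_trans hx.2 hm1)]
      exact hDDpos x hx.1.le hx.2
  have hDpos : ∀ y : ℝ, 0 < y → y ≤ m → 0 < psiD r y := by
    intro y hy0 hym
    have := hDmono (Set.mem_Icc.2 ⟨le_refl 0, hm0.le⟩) (Set.mem_Icc.2 ⟨hy0.le, hym⟩) hy0
    rwa [psiD_zero] at this
  -- psiFix > 0 on (0, m]
  have hmono : StrictMonoOn (psiFix r) (Set.Icc 0 m) := by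
    apply strictMonoOn_of_deriv_pos (convex_Icc 0 m)
    · exact fun x hx => (hcontAt x (lt_of_le_of_lt hx.2 hm1)).continuousWithinAt
    · intro x hx
      rw [interior_Icc] at hx
      rw [hderiv x (lt_trans hx.2 hm1)]
      exact hDpos x hx.1 hx.2.le
  have hpos_le_m : ∀ y : ℝ, 0 < y → y ≤ m → 0 < psiFix r y := by
    intro y hy0 hym
    have := hmono (Set.mem_Icc.2 ⟨le_refl 0, hm0.le⟩) (Set.mem_Icc.2 ⟨hy0.le, hym⟩) hy0
    rwa [psiFix_zero] at this
  have hpsim : 0 < psiFix r m := hpos_le_m m hm0 le_rfl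
  -- strict concavity on [m, 1)
  have hconc : StrictConcaveOn ℝ (Set.Ico m 1) (psiFix r) := by
    apply strictConcaveOn_of_deriv2_neg (convex_Ico m 1)
    · exact fun x hx => (hcontAt x hx.2).continuousWithinAt
    · intro x hx
      rw [interior_Ico] at hx
      show deriv (deriv (psiFix r)) x < 0
      have hev : deriv (psiFix r) =ᶠ[nhds x] psiD r :=
        Filter.eventuallyEq_of_mem (Iio_mem_nhds hx.2) fun y hy => hderiv y hy
      rw [hev.deriv_eq, hderivD x hx.2]
      exact hDDneg x hx.1 hx.2
  -- a point where psiFix is negative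
  set a : ℝ := 1 - Real.exp (-(2 * R)) with ha
  have he0 : 0 < Real.exp (-(2 * R)) := Real.exp_pos _
  have ha1 : a < 1 := by rw [ha]; linarith
  have hexp2R : R - 1 < Real.exp (2 * R) := by
    have := Real.add_one_le_exp (2 * R)
    linarith
  have hprod : Real.exp (-(2 * R)) * Real.exp (2 * R) = 1 := by
    rw [← Real.exp_add]; simp
  have ham : m < a := by
    rw [hm, ha, div_lt_iff₀ (by linarith : (0:ℝ) < R - 1)]
    nlinarith
  have ha0 : 0 < a := lt_trans hm0 ham
  have hcRa : (((r:ℝ) - 1) / (r:ℝ)) * R = R - 1 := by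
    rw [← hRdef]; field_simp
  have hpsia : psiFix r a < 0 := by
    have hlog : Real.log (1 - a) = -(2 * R) := by
      rw [ha]; rw [show (1:ℝ) - (1 - Real.exp (-(2*R))) = Real.exp (-(2*R)) by ring]
      exact Real.log_exp _
    unfold psiFix
    rw [← hRdef] at *
    rw [hlog]
    nlinarith [hcRa, ha0, ha1, hR]
  -- intermediate value: root x* in (m, a)
  have hcont_Icc : ContinuousOn (psiFix r) (Set.Icc m a) := fun x hx =>
    (hcontAt x (lt_of_le_of_lt hx.2 ha1)).continuousWithinAt
  have hIV := intermediate_value_Ioo' (le_of_lt ham) hcont_Icc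
  have h0mem : (0:ℝ) ∈ Set.Ioo (psiFix r a) (psiFix r m) := ⟨hpsia, hpsim⟩
  obtain ⟨x, hxIoo, hx0⟩ := hIV h0mem
  have hxm : m < x := hxIoo.1
  have hx1 : x < 1 := lt_trans hxIoo.2 ha1
  have hx0' : 0 < x := lt_trans hm0 hxm
  -- concavity interpolation helper
  have hmid : ∀ p q y : ℝ, m ≤ p → p < y → y < q → q < 1 →
      ((q - y) / (q - p)) * psiFix r p + ((y - p) / (q - p)) * psiFix r q < psiFix r y := by
    intro p q y hmp hpy hyq hq1
    have hpq : p < q := lt_trans hpy hyq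
    have hqp : (0:ℝ) < q - p := by linarith
    have hp1 : p < 1 := lt_trans hpq hq1
    have h := hconc.2 (Set.mem_Ico.2 ⟨hmp, hp1⟩) (Set.mem_Ico.2 ⟨le_trans hmp hpq.le, hq1⟩)
      (ne_of_lt hpq)
      (show (0:ℝ) < (q - y) / (q - p) from div_pos (by linarith) hqp)
      (show (0:ℝ) < (y - p) / (q - p) from div_pos (by linarith) hqp)
      (by rw [← add_div, div_eq_one_iff_eq (ne_of_gt hqp)]; ring)
    have hcomb : ((q - y) / (q - p)) • p + ((y - p) / (q - p)) • q = y := by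
      rw [smul_eq_mul, smul_eq_mul]; field_simp; ring
    rw [hcomb] at h
    simpa [smul_eq_mul] using h
  -- sign on (m, x)
  have hpos_mid : ∀ y : ℝ, m < y → y < x → 0 < psiFix r y := by
    intro y hmy hyx
    have h := hmid m x y le_rfl hmy hyx hx1
    rw [hx0] at h
    have ht : 0 < (x - y) / (x - m) := div_pos (by linarith) (by linarith)
    nlinarith
  have hpos : ∀ y : ℝ, 0 < y → y < x → 0 < psiFix r y := by
    intro y hy0 hyx
    rcases le_or_gt y m with h | h
    · exact hpos_le_m y hy0 h
    · exact hpos_mid y h hyx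
  -- sign on (x, 1)
  have hneg : ∀ y : ℝ, x < y → y < 1 → psiFix r y < 0 := by
    intro y hxy hy1
    have h := hmid m y x le_rfl hxm hxy hy1
    rw [hx0] at h
    have ht : 0 < (y - x) / (y - m) := div_pos (by linarith) (by linarith)
    have ht2 : 0 < (x - m) / (y - m) := div_pos (by linarith) (by linarith)
    nlinarith
  refine ⟨x, ⟨hx0', hx1⟩, hx0, ?_, hxm, hpos, hneg⟩
  intro y hy hy0
  rcases lt_trichotomy y x with h | h | h
  · exact absurd hy0 (ne_of_gt (hpos y hy.1 h))
  · exact h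
  · exact absurd hy0 (ne_of_lt (hneg y h hy.2))
end

section
/- Let W be a random variable taking values in ℕ = {1,2,...} with probability generating function ρ(s) = E[s^W], and for x ∈ (0,1) define ψ(x) = x + (1 + ρ(x)/ρ′(x) − x) log(1−x) and h(x) = −log(1−x)/ρ′(x). Then for all x ∈ (0,1), h′(x) = −ψ′(x)/ρ(x); in particular, ψ′(x) has the same sign as −h′(x), so the locations of the local minima of h in (0,1) coincide exactly with the locations of the local maxima of ψ in (0,1). Moreover, if E[W²] < ∞, then as x ↓ 0, ψ(1−x) = 1 − h(1−x) − x + o(x). -/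
open Filter Topology Asymptotics

/-- The probability generating function `ρ(s) = E[s^W]` of an `ℕ`-valued random
variable `W` with probability mass function `p`. -/
noncomputable def rho (p : ℕ → ℝ) (s : ℝ) : ℝ := ∑' k, p k * s ^ k

/-- `h(x) = -log(1-x)/ρ'(x)`. -/
noncomputable def hfun (p : ℕ → ℝ) (x : ℝ) : ℝ :=
  -Real.log (1 - x) / deriv (rho p) x

/-- `ψ(x) = x + (1 + ρ(x)/ρ'(x) - x) log(1-x)`. -/
noncomputable def psi (p : ℕ → ℝ) (x : ℝ) : ℝ :=
  x + (1 + rho p x / deriv (rho p) x - x) * Real.log (1 - x)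

open Set

/-- first derivative series -/
noncomputable def rder (p : ℕ → ℝ) (x : ℝ) : ℝ := ∑' (k : ℕ), (k : ℝ) * p k * x ^ (k - 1)

/-- second derivative series -/
noncomputable def rder2 (p : ℕ → ℝ) (x : ℝ) : ℝ :=
  ∑' (k : ℕ), (k : ℝ) * ((k : ℝ) - 1) * p k * x ^ (k - 2)

section basics
variable {p : ℕ → ℝ}

lemma psummable (hpsum : ∑' k, p k = 1) : Summable p := by
  by_contra h
  rw [tsum_eq_zero_of_not_summable h] at hpsum
  norm_num at hpsum

lemma p_le_one (hpnn : ∀ k, 0 ≤ p k) (hpsum : ∑' k, p k = 1) (k : ℕ) : p k ≤ 1 := by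
  have := Summable.le_tsum (psummable hpsum) k (fun j _ => hpnn j)
  linarith [hpsum ▸ this]

lemma summable_rho (hpnn : ∀ k, 0 ≤ p k) (hpsum : ∑' k, p k = 1) {x : ℝ} (hx : |x| ≤ 1) :
    Summable (fun k => p k * x ^ k) := by
  apply Summable.of_norm_bounded (psummable hpsum)
  intro k
  rw [norm_mul, norm_pow]
  calc ‖p k‖ * ‖x‖ ^ k ≤ ‖p k‖ * 1 := by
        apply mul_le_mul_of_nonneg_left _ (norm_nonneg _)
        exact pow_le_one₀ (norm_nonneg x) (by rwa [Real.norm_eq_abs])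
    _ = p k := by rw [mul_one, Real.norm_eq_abs, abs_of_nonneg (hpnn k)]

lemma summable_rder_aux (hpnn : ∀ k, 0 ≤ p k) (hpsum : ∑' k, p k = 1) {r : ℝ}
    (hr0 : 0 < r) (hr1 : r < 1) :
    Summable (fun k : ℕ => r⁻¹ * ((k : ℝ) * r ^ k)) := by
  apply Summable.mul_left
  simpa using summable_pow_mul_geometric_of_norm_lt_one 1 (r := r)
    (by rwa [Real.norm_eq_abs, abs_of_pos hr0])

lemma rder_term_bound (hpnn : ∀ k, 0 ≤ p k) (hpsum : ∑' k, p k = 1) {r y : ℝ}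
    (hr0 : 0 < r) (hy : |y| ≤ r) (k : ℕ) :
    ‖(k : ℝ) * p k * y ^ (k - 1)‖ ≤ r⁻¹ * ((k : ℝ) * r ^ k) := by
  rcases k with _ | n
  · simp [hr0.le]
  · have h1 : ‖(↑(n+1) : ℝ) * p (n+1) * y ^ n‖ ≤ (↑(n+1) : ℝ) * r ^ n := by
      rw [norm_mul, norm_mul]
      have : ‖y ^ n‖ ≤ r ^ n := by
        rw [norm_pow, Real.norm_eq_abs]
        exact pow_le_pow_left₀ (abs_nonneg y) hy n
      have h2 : ‖p (n+1)‖ ≤ 1 := by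
        rw [Real.norm_eq_abs, abs_of_nonneg (hpnn _)]; exact p_le_one hpnn hpsum _
      calc ‖(↑(n+1) : ℝ)‖ * ‖p (n+1)‖ * ‖y ^ n‖ ≤ ‖(↑(n+1) : ℝ)‖ * 1 * r ^ n := by
            apply mul_le_mul (mul_le_mul_of_nonneg_left h2 (norm_nonneg _)) this
              (norm_nonneg _) (by positivity)
        _ = (↑(n+1) : ℝ) * r ^ n := by
            rw [mul_one, Real.norm_eq_abs, abs_of_nonneg (by positivity)]
    calc ‖(↑(n+1) : ℝ) * p (n+1) * y ^ (n + 1 - 1)‖ = ‖(↑(n+1) : ℝ) * p (n+1) * y ^ n‖ := by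
          norm_num
      _ ≤ (↑(n+1) : ℝ) * r ^ n := h1
      _ = r⁻¹ * ((↑(n+1) : ℝ) * r ^ (n+1)) := by
          field_simp
          ring

lemma summable_rder (hpnn : ∀ k, 0 ≤ p k) (hpsum : ∑' k, p k = 1) {x : ℝ} (hx : |x| < 1) :
    Summable (fun k : ℕ => (k : ℝ) * p k * x ^ (k - 1)) := by
  set r : ℝ := (|x| + 1) / 2 with hr
  have hxr : |x| ≤ r := by simp only [hr]; linarith [abs_nonneg x]
  have hr0 : 0 < r := by simp only [hr]; linarith [abs_nonneg x]
  have hr1 : r < 1 := by simp only [hr]; linarith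
  exact Summable.of_norm_bounded (summable_rder_aux hpnn hpsum hr0 hr1)
    (rder_term_bound hpnn hpsum hr0 hxr)

lemma hasDerivAt_rho_aux (hpnn : ∀ k, 0 ≤ p k) (hpsum : ∑' k, p k = 1) {x : ℝ}
    (hx : |x| < 1) :
    HasDerivAt (rho p) (∑' (k : ℕ), p k * ((k : ℝ) * x ^ (k - 1))) x := by
  set r : ℝ := (|x| + 1) / 2 with hr
  have hxr : |x| < r := by simp only [hr]; linarith
  have hr0 : 0 < r := by simp only [hr]; linarith [abs_nonneg x]
  have hr1 : r < 1 := by simp only [hr]; linarith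
  refine hasDerivAt_tsum_of_isPreconnected (u := fun k : ℕ => r⁻¹ * ((k : ℝ) * r ^ k))
    (summable_rder_aux hpnn hpsum hr0 hr1) (isOpen_Ioo (a := -r) (b := r))
    (convex_Ioo _ _).isPreconnected
    (g := fun k y => p k * y ^ k) (g' := fun k y => p k * ((k : ℝ) * y ^ (k - 1)))
    (fun k y _ => (hasDerivAt_pow k y).const_mul (p k))
    (fun k y hy => ?_) (y₀ := 0) (by constructor <;> linarith)
    (summable_rho hpnn hpsum (by norm_num)) (by constructor <;> linarith [abs_lt.mp hxr])
  have hy' : |y| ≤ r := le_of_lt (abs_lt.mpr ⟨hy.1, hy.2⟩)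
  have hb := rder_term_bound hpnn hpsum hr0 hy' k
  calc ‖p k * ((k : ℝ) * y ^ (k - 1))‖ = ‖(k : ℝ) * p k * y ^ (k - 1)‖ := by ring_nf
    _ ≤ _ := hb

lemma hasDerivAt_rho (hpnn : ∀ k, 0 ≤ p k) (hpsum : ∑' k, p k = 1) {x : ℝ}
    (hx : |x| < 1) : HasDerivAt (rho p) (rder p x) x := by
  have h := hasDerivAt_rho_aux hpnn hpsum hx
  convert h using 1
  exact tsum_congr fun k => by ring

lemma deriv_rho (hpnn : ∀ k, 0 ≤ p k) (hpsum : ∑' k, p k = 1) {x : ℝ}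
    (hx : |x| < 1) : deriv (rho p) x = rder p x :=
  (hasDerivAt_rho hpnn hpsum hx).deriv

lemma summable_rder2_aux {r : ℝ} (hr0 : 0 < r) (hr1 : r < 1) :
    Summable (fun k : ℕ => (r⁻¹ * r⁻¹) * ((k : ℝ)^2 * r ^ k)) := by
  apply Summable.mul_left
  simpa using summable_pow_mul_geometric_of_norm_lt_one 2 (r := r)
    (by rwa [Real.norm_eq_abs, abs_of_pos hr0])

lemma rder2_term_bound (hpnn : ∀ k, 0 ≤ p k) (hpsum : ∑' k, p k = 1) {r y : ℝ}
    (hr0 : 0 < r) (hy : |y| ≤ r) (k : ℕ) :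
    ‖(k : ℝ) * p k * (((k - 1 : ℕ) : ℝ) * y ^ (k - 1 - 1))‖ ≤ (r⁻¹ * r⁻¹) * ((k : ℝ)^2 * r ^ k) := by
  have hrpos : (0:ℝ) < r ^ k := pow_pos hr0 k
  rcases k with _ | n
  · simpa using by positivity
  rcases n with _ | m
  · simpa using by positivity
  · have hyk : ‖y ^ m‖ ≤ r ^ m := by
      rw [norm_pow, Real.norm_eq_abs]
      exact pow_le_pow_left₀ (abs_nonneg y) hy m
    have hp1 : ‖p (m+2)‖ ≤ 1 := by
      rw [Real.norm_eq_abs, abs_of_nonneg (hpnn _)]; exact p_le_one hpnn hpsum _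
    simp only [Nat.add_sub_cancel]
    rw [norm_mul, norm_mul, norm_mul]
    have hn1 : ‖((m+1+1 : ℕ):ℝ)‖ = (m:ℝ) + 2 := by
      push_cast
      rw [Real.norm_eq_abs, abs_of_nonneg (by positivity)]
      ring
    have hn2 : ‖((m+1 : ℕ):ℝ)‖ = (m:ℝ) + 1 := by
      push_cast
      rw [Real.norm_eq_abs, abs_of_nonneg (by positivity)]
    rw [hn1, hn2]
    push_cast
    have key : ((m:ℝ) + 2) * ‖p (m+2)‖ * (((m:ℝ) + 1) * ‖y ^ m‖)
        ≤ ((m:ℝ) + 2) * 1 * (((m:ℝ) + 1) * r ^ m) := by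
      apply mul_le_mul (mul_le_mul_of_nonneg_left hp1 (by positivity))
        (mul_le_mul_of_nonneg_left hyk (by positivity)) (by positivity) (by positivity)
    refine key.trans ?_
    have hrm : (0:ℝ) < r ^ m := pow_pos hr0 m
    have he : r⁻¹ * r⁻¹ * (((m:ℝ)+1+1)^2 * r ^ (m+1+1)) = (((m:ℝ)+2)^2) * r ^ m := by
      have : r ^ (m+1+1) = r ^ m * r * r := by ring
      rw [this]
      field_simp
      ring
    rw [he]
    have he2 : ((m:ℝ) + 2) * 1 * (((m:ℝ) + 1) * r ^ m) = (((m:ℝ)+2) * ((m:ℝ)+1)) * r ^ m := by ring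
    rw [he2]
    apply mul_le_mul_of_nonneg_right _ hrm.le
    nlinarith [sq_nonneg ((m:ℝ)+1)]

lemma summable_rder2 (hpnn : ∀ k, 0 ≤ p k) (hpsum : ∑' k, p k = 1) {x : ℝ} (hx : |x| < 1) :
    Summable (fun k : ℕ => (k : ℝ) * p k * (((k - 1 : ℕ) : ℝ) * x ^ (k - 1 - 1))) := by
  set r : ℝ := (|x| + 1) / 2 with hr
  have hxr : |x| ≤ r := by simp only [hr]; linarith [abs_nonneg x]
  have hr0 : 0 < r := by simp only [hr]; linarith [abs_nonneg x]
  have hr1 : r < 1 := by simp only [hr]; linarith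
  exact Summable.of_norm_bounded (summable_rder2_aux hr0 hr1)
    (rder2_term_bound hpnn hpsum hr0 hxr)

lemma hasDerivAt_rder (hpnn : ∀ k, 0 ≤ p k) (hpsum : ∑' k, p k = 1) {x : ℝ}
    (hx : |x| < 1) : HasDerivAt (rder p) (rder2 p x) x := by
  set r : ℝ := (|x| + 1) / 2 with hr
  have hxr : |x| < r := by simp only [hr]; linarith
  have hr0 : 0 < r := by simp only [hr]; linarith [abs_nonneg x]
  have hr1 : r < 1 := by simp only [hr]; linarith
  have main : HasDerivAt (fun y => ∑' (k : ℕ), (k : ℝ) * p k * y ^ (k-1))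
      (∑' (k : ℕ), (k : ℝ) * p k * (((k - 1 : ℕ) : ℝ) * x ^ (k - 1 - 1))) x := by
    refine hasDerivAt_tsum_of_isPreconnected (u := fun k : ℕ => (r⁻¹ * r⁻¹) * ((k : ℝ)^2 * r ^ k))
      (summable_rder2_aux hr0 hr1) (isOpen_Ioo (a := -r) (b := r))
      (convex_Ioo _ _).isPreconnected
      (g := fun k y => (k : ℝ) * p k * y ^ (k-1))
      (g' := fun k y => (k : ℝ) * p k * (((k - 1 : ℕ) : ℝ) * y ^ (k - 1 - 1)))
      (fun k y _ => (hasDerivAt_pow (k-1) y).const_mul ((k : ℝ) * p k))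
      (fun k y hy => ?_) (y₀ := 0) (by constructor <;> linarith)
      ?_ (by constructor <;> linarith [abs_lt.mp hxr])
    · have hy' : |y| ≤ r := le_of_lt (abs_lt.mpr ⟨hy.1, hy.2⟩)
      exact rder2_term_bound hpnn hpsum hr0 hy' k
    · exact summable_rder hpnn hpsum (x := 0) (by norm_num)
  have : HasDerivAt (rder p) (∑' (k : ℕ), (k : ℝ) * p k * (((k - 1 : ℕ) : ℝ) * x ^ (k - 1 - 1))) x := main
  convert this using 1
  refine tsum_congr fun k => ?_
  rcases k with _ | n
  · simp
  · have e1 : (n + 1 - 1 : ℕ) = n := rfl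
    rw [e1]
    push_cast
    ring_nf

lemma deriv_rder (hpnn : ∀ k, 0 ≤ p k) (hpsum : ∑' k, p k = 1) {x : ℝ}
    (hx : |x| < 1) : deriv (rder p) x = rder2 p x :=
  (hasDerivAt_rder hpnn hpsum hx).deriv

lemma exists_pos (hpnn : ∀ k, 0 ≤ p k) (hp0 : p 0 = 0) (hpsum : ∑' k, p k = 1) :
    ∃ k : ℕ, 1 ≤ k ∧ 0 < p k := by
  by_contra h
  push_neg at h
  have hz : ∀ k, p k = 0 := by
    intro k
    rcases Nat.eq_zero_or_pos k with rfl | hk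
    · exact hp0
    · exact le_antisymm (h k hk) (hpnn k)
  have : ∑' k, p k = 0 := by simp [hz]
  rw [hpsum] at this
  norm_num at this

lemma rho_pos (hpnn : ∀ k, 0 ≤ p k) (hp0 : p 0 = 0) (hpsum : ∑' k, p k = 1) {x : ℝ}
    (hx : x ∈ Ioo (0:ℝ) 1) : 0 < rho p x := by
  obtain ⟨k, hk1, hkpos⟩ := exists_pos hpnn hp0 hpsum
  have habs : |x| ≤ 1 := by rw [abs_of_pos hx.1]; exact hx.2.le
  exact Summable.tsum_pos (summable_rho hpnn hpsum habs)
    (fun j => mul_nonneg (hpnn j) (pow_nonneg hx.1.le j)) k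
    (mul_pos hkpos (pow_pos hx.1 k))

lemma rder_pos (hpnn : ∀ k, 0 ≤ p k) (hp0 : p 0 = 0) (hpsum : ∑' k, p k = 1) {x : ℝ}
    (hx : x ∈ Ioo (0:ℝ) 1) : 0 < rder p x := by
  obtain ⟨k, hk1, hkpos⟩ := exists_pos hpnn hp0 hpsum
  have habs : |x| < 1 := by rw [abs_of_pos hx.1]; exact hx.2
  refine Summable.tsum_pos (summable_rder hpnn hpsum habs)
    (fun j => mul_nonneg (mul_nonneg (Nat.cast_nonneg j) (hpnn j)) (pow_nonneg hx.1.le _)) k ?_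
  have : (0:ℝ) < (k:ℝ) := by exact_mod_cast hk1
  exact mul_pos (mul_pos this hkpos) (pow_pos hx.1 _)

lemma rder_mono (hpnn : ∀ k, 0 ≤ p k) (hpsum : ∑' k, p k = 1) {a b : ℝ}
    (ha : 0 ≤ a) (hab : a ≤ b) (hb : b < 1) : rder p a ≤ rder p b := by
  have habsa : |a| < 1 := by rw [abs_of_nonneg ha]; linarith
  have habsb : |b| < 1 := by rw [abs_of_nonneg (ha.trans hab)]; exact hb
  refine Summable.tsum_le_tsum (fun k => ?_) (summable_rder hpnn hpsum habsa)
    (summable_rder hpnn hpsum habsb)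
  apply mul_le_mul_of_nonneg_left (pow_le_pow_left₀ ha hab _)
  exact mul_nonneg (Nat.cast_nonneg k) (hpnn k)

lemma analyticAt_rho (hpnn : ∀ k, 0 ≤ p k) (hpsum : ∑' k, p k = 1) {x : ℝ}
    (hx : |x| < 1) : AnalyticAt ℝ (rho p) x := by
  set q : FormalMultilinearSeries ℝ ℝ ℝ := FormalMultilinearSeries.ofScalars ℝ p with hq
  have hrad : (1 : ENNReal) ≤ q.radius := by
    apply q.le_radius_of_bound 1 (r := 1)
    intro n
    rw [FormalMultilinearSeries.ofScalars_norm]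
    simp only [NNReal.coe_one, one_pow, mul_one, Real.norm_eq_abs]
    rw [abs_of_nonneg (hpnn n)]
    exact p_le_one hpnn hpsum n
  have hpos : 0 < q.radius := lt_of_lt_of_le (by norm_num) hrad
  have hball := q.hasFPowerSeriesOnBall hpos
  have hsum_eq : q.sum = rho p := by
    funext y
    rw [show q.sum y = FormalMultilinearSeries.ofScalarsSum p y from rfl,
      FormalMultilinearSeries.ofScalars_sum_eq]
    exact tsum_congr fun n => by rw [smul_eq_mul]
  rw [hsum_eq] at hball
  have hmem : x ∈ Metric.eball (0:ℝ) q.radius := by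
    rw [Metric.mem_eball, edist_zero_right]
    calc ‖x‖₊ < (1 : ENNReal) := by
          rw [← ENNReal.coe_one, ENNReal.coe_lt_coe, ← NNReal.coe_lt_coe]
          simpa [Real.norm_eq_abs] using hx
      _ ≤ q.radius := hrad
  exact hball.analyticOnNhd x hmem

lemma analyticAt_deriv_of_analyticAt {f : ℝ → ℝ} {x : ℝ} (h : AnalyticAt ℝ f x) :
    AnalyticAt ℝ (deriv f) x := by
  have h1 : AnalyticAt ℝ (fderiv ℝ f) x := h.fderiv
  have h2 : AnalyticAt ℝ (fun y => (fderiv ℝ f y) 1) x :=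
    ((ContinuousLinearMap.apply ℝ ℝ (1:ℝ)).analyticAt _).comp h1
  exact h2.congr (Filter.Eventually.of_forall fun y => rfl)

lemma analyticAt_rder (hpnn : ∀ k, 0 ≤ p k) (hpsum : ∑' k, p k = 1) {x : ℝ}
    (hx : |x| < 1) : AnalyticAt ℝ (rder p) x := by
  have h1 : AnalyticAt ℝ (deriv (rho p)) x :=
    analyticAt_deriv_of_analyticAt (analyticAt_rho hpnn hpsum hx)
  apply h1.congr
  have hopen : {y : ℝ | |y| < 1} ∈ 𝓝 x := (isOpen_lt (continuous_abs) continuous_const).mem_nhds hx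
  filter_upwards [hopen] with y hy
  exact deriv_rho hpnn hpsum hy

lemma analyticAt_rder2 (hpnn : ∀ k, 0 ≤ p k) (hpsum : ∑' k, p k = 1) {x : ℝ}
    (hx : |x| < 1) : AnalyticAt ℝ (rder2 p) x := by
  have h1 : AnalyticAt ℝ (deriv (rder p)) x :=
    analyticAt_deriv_of_analyticAt (analyticAt_rder hpnn hpsum hx)
  apply h1.congr
  have hopen : {y : ℝ | |y| < 1} ∈ 𝓝 x := (isOpen_lt (continuous_abs) continuous_const).mem_nhds hx
  filter_upwards [hopen] with y hy
  exact deriv_rder hpnn hpsum hy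

lemma analyticAt_rlog {x : ℝ} (hx : 0 < x) : AnalyticAt ℝ Real.log x := by
  have h1 : AnalyticAt ℂ Complex.log (x : ℂ) :=
    analyticAt_clog (Complex.ofReal_mem_slitPlane.mpr hx)
  have h2 : AnalyticAt ℝ Complex.log (x : ℂ) := h1.restrictScalars
  have h3 : AnalyticAt ℝ (fun y : ℝ => (y : ℂ)) x := Complex.ofRealCLM.analyticAt x
  have h4 : AnalyticAt ℝ (fun y : ℝ => Complex.log (y : ℂ)) x := h2.comp h3
  have h5 : AnalyticAt ℝ (fun y : ℝ => (Complex.log (y : ℂ)).re) x :=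
    (Complex.reCLM.analyticAt _).comp h4
  apply h5.congr
  filter_upwards [eventually_gt_nhds hx] with y hy
  rw [Complex.log_ofReal_re]

/-- the derivative of `hfun` -/
noncomputable def Hd (p : ℕ → ℝ) (x : ℝ) : ℝ :=
  ((1 - x)⁻¹ * rder p x - -Real.log (1 - x) * rder2 p x) / (rder p x) ^ 2

lemma mem_nhds_Ioo {x : ℝ} (hx : x ∈ Ioo (0:ℝ) 1) : Ioo (0:ℝ) 1 ∈ 𝓝 x :=
  isOpen_Ioo.mem_nhds hx

lemma abs_lt_one_of_mem {y : ℝ} (hy : y ∈ Ioo (0:ℝ) 1) : |y| < 1 := by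
  rw [abs_of_pos hy.1]; exact hy.2

lemma hfun_eventually (hpnn : ∀ k, 0 ≤ p k) (hpsum : ∑' k, p k = 1) {x : ℝ}
    (hx : x ∈ Ioo (0:ℝ) 1) :
    hfun p =ᶠ[𝓝 x] fun y => -Real.log (1 - y) / rder p y := by
  filter_upwards [mem_nhds_Ioo hx] with y hy
  rw [hfun, deriv_rho hpnn hpsum (abs_lt_one_of_mem hy)]

lemma psi_eventually (hpnn : ∀ k, 0 ≤ p k) (hpsum : ∑' k, p k = 1) {x : ℝ}
    (hx : x ∈ Ioo (0:ℝ) 1) :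
    psi p =ᶠ[𝓝 x] fun y => y + (1 + rho p y / rder p y - y) * Real.log (1 - y) := by
  filter_upwards [mem_nhds_Ioo hx] with y hy
  rw [psi, deriv_rho hpnn hpsum (abs_lt_one_of_mem hy)]

lemma hasDerivAt_hfun (hpnn : ∀ k, 0 ≤ p k) (hp0 : p 0 = 0) (hpsum : ∑' k, p k = 1) {x : ℝ}
    (hx : x ∈ Ioo (0:ℝ) 1) : HasDerivAt (hfun p) (Hd p x) x := by
  have h1x : (1:ℝ) - x ≠ 0 := by have := hx.2; intro h; linarith [hx.2]
  have hr : rder p x ≠ 0 := (rder_pos hpnn hp0 hpsum hx).ne'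
  have habs : |x| < 1 := abs_lt_one_of_mem hx
  have hu : HasDerivAt (fun y : ℝ => -Real.log (1 - y)) ((1 - x)⁻¹) x := by
    have h2 : HasDerivAt (fun y : ℝ => (1:ℝ) - y) (-1) x := by
      simpa using (hasDerivAt_id x).const_sub 1
    have h3 : HasDerivAt (fun y : ℝ => -Real.log (1 - y)) _ x := (h2.log h1x).neg
    convert h3 using 1
    ring
  have hv : HasDerivAt (rder p) (rder2 p x) x := hasDerivAt_rder hpnn hpsum habs
  have := hu.div hv hr
  apply HasDerivAt.congr_of_eventuallyEq _ (hfun_eventually hpnn hpsum hx)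
  exact this

lemma hasDerivAt_psi (hpnn : ∀ k, 0 ≤ p k) (hp0 : p 0 = 0) (hpsum : ∑' k, p k = 1) {x : ℝ}
    (hx : x ∈ Ioo (0:ℝ) 1) : HasDerivAt (psi p) (-(rho p x * Hd p x)) x := by
  have h1x : (1:ℝ) - x ≠ 0 := by intro h; linarith [hx.2]
  have h1xpos : (0:ℝ) < 1 - x := by linarith [hx.2]
  have hr : rder p x ≠ 0 := (rder_pos hpnn hp0 hpsum hx).ne'
  have hrho : rho p x ≠ 0 := (rho_pos hpnn hp0 hpsum hx).ne'
  have habs : |x| < 1 := abs_lt_one_of_mem hx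
  have hL : HasDerivAt (fun y : ℝ => Real.log (1 - y)) (-(1 - x)⁻¹) x := by
    have h2 : HasDerivAt (fun y : ℝ => (1:ℝ) - y) (-1) x := by
      simpa using (hasDerivAt_id x).const_sub 1
    have h3 := h2.log h1x
    convert h3 using 1
    field_simp
  have hrho' : HasDerivAt (rho p) (rder p x) x := hasDerivAt_rho hpnn hpsum habs
  have hrder' : HasDerivAt (rder p) (rder2 p x) x := hasDerivAt_rder hpnn hpsum habs
  have hq : HasDerivAt (fun y => rho p y / rder p y)
      ((rder p x * rder p x - rho p x * rder2 p x) / (rder p x)^2) x := hrho'.div hrder' hr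
  have hin : HasDerivAt (fun y => 1 + rho p y / rder p y - y)
      ((rder p x * rder p x - rho p x * rder2 p x) / (rder p x)^2 - 1) x :=
    ((hq.const_add 1).sub (hasDerivAt_id x))
  have hmul := hin.mul hL
  have hfull : HasDerivAt (fun y => y + (1 + rho p y / rder p y - y) * Real.log (1 - y)) _ x :=
    (hasDerivAt_id x).add hmul
  apply HasDerivAt.congr_of_eventuallyEq _ (psi_eventually hpnn hpsum hx)
  refine hfull.congr_deriv ?_
  rw [Hd]
  field_simp
  ring

section localkey
open Set

lemma strictMonoOn_of_deriv {f F : ℝ → ℝ} {a b : ℝ}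
    (hd : ∀ y ∈ Icc a b, HasDerivAt f (F y) y)
    (hF : ∀ y ∈ Ioo a b, 0 < F y) : StrictMonoOn f (Icc a b) := by
  apply strictMonoOn_of_deriv_pos (convex_Icc a b)
  · intro y hy
    exact (hd y hy).differentiableAt.continuousAt.continuousWithinAt
  · intro y hy
    rw [interior_Icc] at hy
    rw [(hd y (Ioo_subset_Icc_self hy)).deriv]
    exact hF y hy

lemma strictAntiOn_of_deriv {f F : ℝ → ℝ} {a b : ℝ}
    (hd : ∀ y ∈ Icc a b, HasDerivAt f (F y) y)
    (hF : ∀ y ∈ Ioo a b, F y < 0) : StrictAntiOn f (Icc a b) := by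
  apply strictAntiOn_of_deriv_neg (convex_Icc a b)
  · intro y hy
    exact (hd y hy).differentiableAt.continuousAt.continuousWithinAt
  · intro y hy
    rw [interior_Icc] at hy
    rw [(hd y (Ioo_subset_Icc_self hy)).deriv]
    exact hF y hy

/-- if derivative is negative left and positive right, local min -/
lemma isLocalMin_of_signs {f F : ℝ → ℝ} {x δ : ℝ} (hδ : 0 < δ)
    (hd : ∀ y ∈ Ioo (x - δ) (x + δ), HasDerivAt f (F y) y)
    (hL : ∀ y ∈ Ioo (x - δ) x, F y < 0) (hR : ∀ y ∈ Ioo x (x + δ), 0 < F y) :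
    IsLocalMin f x := by
  have hmem : Ioo (x - δ/2) (x + δ/2) ∈ 𝓝 x := Ioo_mem_nhds (by linarith) (by linarith)
  have hanti : StrictAntiOn f (Icc (x - δ/2) x) := by
    apply strictAntiOn_of_deriv
    · intro y hy
      exact hd y ⟨by linarith [hy.1], by linarith [hy.2]⟩
    · intro y hy
      exact hL y ⟨by linarith [hy.1], hy.2⟩
  have hmono : StrictMonoOn f (Icc x (x + δ/2)) := by
    apply strictMonoOn_of_deriv
    · intro y hy
      exact hd y ⟨by linarith [hy.1], by linarith [hy.2]⟩
    · intro y hy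
      exact hR y ⟨hy.1, by linarith [hy.2]⟩
  filter_upwards [hmem] with y hy
  rcases lt_trichotomy y x with h | rfl | h
  · exact le_of_lt (hanti ⟨hy.1.le, h.le⟩ ⟨by linarith [hy.1.le], le_refl x⟩ h)
  · exact le_refl _
  · exact le_of_lt (hmono ⟨le_refl x, by linarith⟩ ⟨h.le, hy.2.le⟩ h)

end localkey

/-- a local min is impossible if the derivative is negative on the right -/
lemma not_isLocalMin_of_right_neg {f F : ℝ → ℝ} {x δ : ℝ} (hδ : 0 < δ)
    (hd : ∀ y ∈ Ioo (x - δ) (x + δ), HasDerivAt f (F y) y)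
    (hR : ∀ y ∈ Ioo x (x + δ), F y < 0) (hmin : IsLocalMin f x) : False := by
  have hanti : StrictAntiOn f (Icc x (x + δ/2)) := by
    apply strictAntiOn_of_deriv
    · intro y hy
      exact hd y ⟨by linarith [hy.1], by linarith [hy.2]⟩
    · intro y hy
      exact hR y ⟨hy.1, by linarith [hy.2]⟩
  have h1 : ∀ᶠ y in 𝓝[>] x, f x ≤ f y := nhdsWithin_le_nhds hmin
  have h2 : ∀ᶠ y in 𝓝[>] x, y ∈ Ioo x (x + δ/2) :=
    Ioo_mem_nhdsGT_of_mem ⟨le_refl x, by linarith⟩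
  obtain ⟨y, hy1, hy2⟩ := (h1.and h2).exists
  exact absurd (hanti ⟨le_refl x, by linarith [hy2.2]⟩ ⟨hy2.1.le, hy2.2.le⟩ hy2.1) (not_lt.mpr hy1)

/-- a local min is impossible if the derivative is positive on the left -/
lemma not_isLocalMin_of_left_pos {f F : ℝ → ℝ} {x δ : ℝ} (hδ : 0 < δ)
    (hd : ∀ y ∈ Ioo (x - δ) (x + δ), HasDerivAt f (F y) y)
    (hL : ∀ y ∈ Ioo (x - δ) x, 0 < F y) (hmin : IsLocalMin f x) : False := by
  have hmono : StrictMonoOn f (Icc (x - δ/2) x) := by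
    apply strictMonoOn_of_deriv
    · intro y hy
      exact hd y ⟨by linarith [hy.1], by linarith [hy.2]⟩
    · intro y hy
      exact hL y ⟨by linarith [hy.1], hy.2⟩
  have h1 : ∀ᶠ y in 𝓝[<] x, f x ≤ f y := nhdsWithin_le_nhds hmin
  have h2 : ∀ᶠ y in 𝓝[<] x, y ∈ Ioo (x - δ/2) x :=
    Ioo_mem_nhdsLT_of_mem ⟨by linarith, le_refl x⟩
  obtain ⟨y, hy1, hy2⟩ := (h1.and h2).exists
  exact absurd (hmono ⟨hy2.1.le, hy2.2.le⟩ ⟨by linarith [hy2.1.le], le_refl x⟩ hy2.2)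
    (not_lt.mpr hy1)

lemma isLocalMax_iff_neg {g : ℝ → ℝ} {x : ℝ} :
    IsLocalMax g x ↔ IsLocalMin (fun y => -g y) x := by
  constructor <;> intro h <;> filter_upwards [h] with y hy <;>
    linarith

/-- The key sign dichotomy lemma -/
lemma sign_dichotomy {F : ℝ → ℝ} {x δ : ℝ} (hδ : 0 < δ)
    (hcont : ∀ y ∈ Ioo (x - δ) (x + δ), ContinuousAt F y)
    (hne : ∀ y ∈ Ioo (x - δ) (x + δ), y ≠ x → F y ≠ 0) {a b : ℝ}
    (hsub : Ioo a b ⊆ Ioo (x - δ) (x + δ)) (hxout : x ∉ Ioo a b) :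
    (∀ y ∈ Ioo a b, 0 < F y) ∨ (∀ y ∈ Ioo a b, F y < 0) := by
  by_contra hcon
  push_neg at hcon
  obtain ⟨⟨u, hu, huF⟩, ⟨v, hv, hvF⟩⟩ := hcon
  have huF' : F u < 0 := lt_of_le_of_ne huF (hne u (hsub hu) (fun h => hxout (h ▸ hu)))
  have hvF' : 0 < F v := lt_of_le_of_ne hvF (Ne.symm (hne v (hsub hv) (fun h => hxout (h ▸ hv))))
  have hcont' : ContinuousOn F (uIcc u v) := by
    intro y hy
    apply (hcont y _).continuousWithinAt
    apply hsub
    rcases le_total u v with h | h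
    · rw [uIcc_of_le h] at hy
      exact ⟨lt_of_lt_of_le hu.1 hy.1, lt_of_le_of_lt hy.2 hv.2⟩
    · rw [uIcc_of_ge h] at hy
      exact ⟨lt_of_lt_of_le hv.1 hy.1, lt_of_le_of_lt hy.2 hu.2⟩
  have h0mem : (0:ℝ) ∈ uIcc (F u) (F v) := by
    rw [mem_uIcc]
    left; exact ⟨huF'.le, hvF'.le⟩
  obtain ⟨c, hc, hFc⟩ := intermediate_value_uIcc hcont' h0mem
  have hcmem : c ∈ Ioo a b := by
    rcases le_total u v with h | h
    · rw [uIcc_of_le h] at hc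
      exact ⟨lt_of_lt_of_le hu.1 hc.1, lt_of_le_of_lt hc.2 hv.2⟩
    · rw [uIcc_of_ge h] at hc
      exact ⟨lt_of_lt_of_le hv.1 hc.1, lt_of_le_of_lt hc.2 hu.2⟩
  exact hne c (hsub hcmem) (fun h => hxout (h ▸ hcmem)) hFc

/-- Main abstract lemma: if `f' = F`, `g' = -(R·F)` with `R > 0` near `x` and `F` analytic
at `x`, then local minima of `f` correspond to local maxima of `g`. -/
lemma isLocalMin_iff_isLocalMax {f g R F : ℝ → ℝ} {x : ℝ} (hF : AnalyticAt ℝ F x)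
    (hf : ∀ᶠ y in 𝓝 x, HasDerivAt f (F y) y)
    (hg : ∀ᶠ y in 𝓝 x, HasDerivAt g (-(R y * F y)) y)
    (hR : ∀ᶠ y in 𝓝 x, 0 < R y) :
    IsLocalMin f x ↔ IsLocalMax g x := by
  rw [isLocalMax_iff_neg]
  have hg' : ∀ᶠ y in 𝓝 x, HasDerivAt (fun y => -g y) (R y * F y) y := by
    filter_upwards [hg] with y hy
    have := hy.neg; rw [neg_neg] at this; exact this
  have hFcont : ∀ᶠ y in 𝓝 x, ContinuousAt F y := by
    filter_upwards [hF.eventually_analyticAt] with y hy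
    exact hy.continuousAt
  rcases hF.eventually_eq_zero_or_eventually_ne_zero with hz | hnz
  · -- degenerate case : F ≡ 0 near x, both f and -g are locally constant
    have hboth : ∀ (φ : ℝ → ℝ), (∀ᶠ y in 𝓝 x, HasDerivAt φ 0 y) → IsLocalMin φ x := by
      intro φ hφ
      obtain ⟨δ, hδ, hδball⟩ := Metric.eventually_nhds_iff_ball.mp hφ
      have hmem : Ioo (x - δ) (x + δ) ∈ 𝓝 x := Ioo_mem_nhds (by linarith) (by linarith)
      have hd : ∀ y ∈ Ioo (x - δ) (x + δ), HasDerivAt φ 0 y := by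
        intro y hy
        exact hδball y (by rw [Metric.mem_ball, Real.dist_eq, abs_lt]; constructor <;>
          [linarith [hy.1]; linarith [hy.2]])
      have hmono : MonotoneOn φ (Ioo (x - δ) (x + δ)) := by
        apply monotoneOn_of_deriv_nonneg (convex_Ioo _ _)
        · intro y hy
          exact (hd y hy).differentiableAt.continuousAt.continuousWithinAt
        · intro y hy
          rw [interior_Ioo] at hy
          exact (hd y hy).differentiableAt.differentiableWithinAt
        · intro y hy
          rw [interior_Ioo] at hy
          rw [(hd y hy).deriv]
      have hanti : AntitoneOn φ (Ioo (x - δ) (x + δ)) := by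
        apply antitoneOn_of_deriv_nonpos (convex_Ioo _ _)
        · intro y hy
          exact (hd y hy).differentiableAt.continuousAt.continuousWithinAt
        · intro y hy
          rw [interior_Ioo] at hy
          exact (hd y hy).differentiableAt.differentiableWithinAt
        · intro y hy
          rw [interior_Ioo] at hy
          rw [(hd y hy).deriv]
      filter_upwards [hmem] with y hy
      have hxmem : x ∈ Ioo (x - δ) (x + δ) := ⟨by linarith, by linarith⟩
      rcases le_total y x with h | h
      · exact le_of_eq (le_antisymm (hmono hy hxmem h) (hanti hy hxmem h)).symm
      · exact le_of_eq (le_antisymm (hanti hxmem hy h) (hmono hxmem hy h)).symm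
    constructor <;> intro _
    · apply hboth
      filter_upwards [hg', hz] with y hy hy0
      rw [hy0] at hy
      simpa using hy
    · apply hboth
      filter_upwards [hf, hz] with y hy hy0
      rw [hy0] at hy
      simpa using hy
  · -- nondegenerate case
    rw [eventually_nhdsWithin_iff] at hnz
    obtain ⟨δ, hδ, hδball⟩ := Metric.eventually_nhds_iff_ball.mp
      (hf.and (hg'.and (hR.and (hFcont.and hnz))))
    have hIoo : ∀ y ∈ Ioo (x - δ) (x + δ), HasDerivAt f (F y) y ∧
        HasDerivAt (fun y => -g y) (R y * F y) y ∧ 0 < R y ∧ ContinuousAt F y ∧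
        (y ≠ x → F y ≠ 0) := by
      intro y hy
      have := hδball y (by rw [Metric.mem_ball, Real.dist_eq, abs_lt]; constructor <;>
        [linarith [hy.1]; linarith [hy.2]])
      exact ⟨this.1, this.2.1, this.2.2.1, this.2.2.2.1, fun h => this.2.2.2.2 h⟩
    have hcont : ∀ y ∈ Ioo (x - δ) (x + δ), ContinuousAt F y := fun y hy => (hIoo y hy).2.2.2.1
    have hne : ∀ y ∈ Ioo (x - δ) (x + δ), y ≠ x → F y ≠ 0 :=
      fun y hy h => (hIoo y hy).2.2.2.2 h
    have hdf : ∀ y ∈ Ioo (x - δ) (x + δ), HasDerivAt f (F y) y := fun y hy => (hIoo y hy).1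
    have hdg : ∀ y ∈ Ioo (x - δ) (x + δ), HasDerivAt (fun y => -g y) (R y * F y) y :=
      fun y hy => (hIoo y hy).2.1
    have hRpos : ∀ y ∈ Ioo (x - δ) (x + δ), 0 < R y := fun y hy => (hIoo y hy).2.2.1
    have hsubL : Ioo (x - δ) x ⊆ Ioo (x - δ) (x + δ) := fun y hy => ⟨hy.1, by linarith [hy.2]⟩
    have hsubR : Ioo x (x + δ) ⊆ Ioo (x - δ) (x + δ) := fun y hy => ⟨by linarith [hy.1], hy.2⟩
    have hoL : x ∉ Ioo (x - δ) x := fun h => lt_irrefl x h.2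
    have hoR : x ∉ Ioo x (x + δ) := fun h => lt_irrefl x h.1
    have hsL := sign_dichotomy hδ hcont hne hsubL hoL
    have hsR := sign_dichotomy hδ hcont hne hsubR hoR
    -- signs of R*F agree with signs of F
    have hGL : ∀ s ∈ Ioo (x - δ) x, (0 < F s → 0 < R s * F s) ∧ (F s < 0 → R s * F s < 0) :=
      fun s hs => ⟨fun h => mul_pos (hRpos s (hsubL hs)) h,
        fun h => mul_neg_of_pos_of_neg (hRpos s (hsubL hs)) h⟩
    have hGR : ∀ s ∈ Ioo x (x + δ), (0 < F s → 0 < R s * F s) ∧ (F s < 0 → R s * F s < 0) :=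
      fun s hs => ⟨fun h => mul_pos (hRpos s (hsubR hs)) h,
        fun h => mul_neg_of_pos_of_neg (hRpos s (hsubR hs)) h⟩
    rcases hsL with hLpos | hLneg <;> rcases hsR with hRpos' | hRneg
    · -- L pos, R pos : neither is local min
      constructor <;> intro h <;> exfalso
      · exact not_isLocalMin_of_left_pos hδ hdf hLpos h
      · exact not_isLocalMin_of_left_pos hδ hdg
          (fun y hy => (hGL y hy).1 (hLpos y hy)) h
    · -- L pos, R neg
      constructor <;> intro h <;> exfalso
      · exact not_isLocalMin_of_left_pos hδ hdf hLpos h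
      · exact not_isLocalMin_of_left_pos hδ hdg
          (fun y hy => (hGL y hy).1 (hLpos y hy)) h
    · -- L neg, R pos : both are local min
      constructor <;> intro _
      · exact isLocalMin_of_signs hδ hdg
          (fun y hy => (hGL y hy).2 (hLneg y hy))
          (fun y hy => (hGR y hy).1 (hRpos' y hy))
      · exact isLocalMin_of_signs hδ hdf hLneg hRpos'
    · -- L neg, R neg : neither is local min
      constructor <;> intro h <;> exfalso
      · exact not_isLocalMin_of_right_neg hδ hdf hRneg h
      · exact not_isLocalMin_of_right_neg hδ hdg
          (fun y hy => (hGR y hy).2 (hRneg y hy)) h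

lemma analyticAt_Hd (hpnn : ∀ k, 0 ≤ p k) (hp0 : p 0 = 0) (hpsum : ∑' k, p k = 1) {x : ℝ}
    (hx : x ∈ Ioo (0:ℝ) 1) : AnalyticAt ℝ (Hd p) x := by
  have habs : |x| < 1 := abs_lt_one_of_mem hx
  have h1x : (1:ℝ) - x ≠ 0 := by intro h; linarith [hx.2]
  have hr : rder p x ≠ 0 := (rder_pos hpnn hp0 hpsum hx).ne'
  have ha1 : AnalyticAt ℝ (fun y : ℝ => 1 - y) x := analyticAt_const.sub (analyticAt_id)
  have hainv : AnalyticAt ℝ (fun y : ℝ => (1 - y)⁻¹) x := ha1.inv h1x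
  have halog : AnalyticAt ℝ (fun y : ℝ => Real.log (1 - y)) x := by
    have := (analyticAt_rlog (by linarith [hx.2] : (0:ℝ) < 1 - x)).comp ha1
    exact this
  have hard : AnalyticAt ℝ (rder p) x := analyticAt_rder hpnn hpsum habs
  have hard2 : AnalyticAt ℝ (rder2 p) x := analyticAt_rder2 hpnn hpsum habs
  exact ((hainv.mul hard).sub ((halog.neg).mul hard2)).div (hard.pow 2) (by positivity)

lemma part3_s17 (hpnn : ∀ k, 0 ≤ p k) (hp0 : p 0 = 0) (hpsum : ∑' k, p k = 1) {x : ℝ}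
    (hx : x ∈ Ioo (0:ℝ) 1) : (IsLocalMin (hfun p) x ↔ IsLocalMax (psi p) x) := by
  apply isLocalMin_iff_isLocalMax (R := rho p) (analyticAt_Hd hpnn hp0 hpsum hx)
  · filter_upwards [mem_nhds_Ioo hx] with y hy
    exact hasDerivAt_hfun hpnn hp0 hpsum hy
  · filter_upwards [mem_nhds_Ioo hx] with y hy
    exact hasDerivAt_psi hpnn hp0 hpsum hy
  · filter_upwards [mem_nhds_Ioo hx] with y hy
    exact rho_pos hpnn hp0 hpsum hy

lemma part1_s17 (hpnn : ∀ k, 0 ≤ p k) (hp0 : p 0 = 0) (hpsum : ∑' k, p k = 1) {x : ℝ}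
    (hx : x ∈ Ioo (0:ℝ) 1) :
    deriv (hfun p) x = -(deriv (psi p) x) / rho p x := by
  rw [(hasDerivAt_hfun hpnn hp0 hpsum hx).deriv, (hasDerivAt_psi hpnn hp0 hpsum hx).deriv]
  have hrho : rho p x ≠ 0 := (rho_pos hpnn hp0 hpsum hx).ne'
  field_simp

lemma part2_s17 (hpnn : ∀ k, 0 ≤ p k) (hp0 : p 0 = 0) (hpsum : ∑' k, p k = 1) {x : ℝ}
    (hx : x ∈ Ioo (0:ℝ) 1) :
    (0 < deriv (psi p) x ↔ deriv (hfun p) x < 0) ∧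
    (deriv (psi p) x < 0 ↔ 0 < deriv (hfun p) x) := by
  rw [(hasDerivAt_hfun hpnn hp0 hpsum hx).deriv, (hasDerivAt_psi hpnn hp0 hpsum hx).deriv]
  have hrho : 0 < rho p x := rho_pos hpnn hp0 hpsum hx
  constructor
  · constructor
    · intro h; nlinarith
    · intro h; nlinarith
  · constructor
    · intro h; nlinarith
    · intro h; nlinarith

lemma Qbound (k : ℕ) {x : ℝ} (hx0 : 0 ≤ x) (hx1 : x ≤ 1) :
    |(1-x)^(k+1) - 1 + ((k:ℝ)+1) * x * (1-x)^k| ≤ ((k:ℝ)+1)^2 * x^2 := by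
  induction k with
  | zero => simp only [Nat.cast_zero, zero_add, pow_one, one_mul, pow_zero, mul_one]; ring_nf
            simp [abs_nonneg]; positivity
  | succ m ih =>
    push_cast
    have ha0 : (0:ℝ) ≤ 1 - x := by linarith
    have hak : (1-x)^m ≤ 1 := pow_le_one₀ ha0 (by linarith)
    have hak0 : (0:ℝ) ≤ (1-x)^m := pow_nonneg ha0 m
    have hid : (1-x)^(m+1+1) - 1 + ((m:ℝ)+1+1) * x * (1-x)^(m+1)
        = ((1-x)^(m+1) - 1 + ((m:ℝ)+1) * x * (1-x)^m) - ((m:ℝ)+1) * x^2 * (1-x)^m := by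
      push_cast
      ring
    rw [hid]
    have h2 : |((m:ℝ)+1) * x^2 * (1-x)^m| ≤ ((m:ℝ)+1) * x^2 := by
      rw [abs_of_nonneg (by positivity)]
      have hmul := mul_le_mul_of_nonneg_left hak (by positivity : (0:ℝ) ≤ ((m:ℝ)+1) * x^2)
      nlinarith [hmul]
    calc |((1-x)^(m+1) - 1 + ((m:ℝ)+1) * x * (1-x)^m) - ((m:ℝ)+1) * x^2 * (1-x)^m|
        ≤ |(1-x)^(m+1) - 1 + ((m:ℝ)+1) * x * (1-x)^m| + |((m:ℝ)+1) * x^2 * (1-x)^m| :=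
          abs_sub _ _
      _ ≤ ((m:ℝ)+1)^2 * x^2 + ((m:ℝ)+1) * x^2 := add_le_add ih h2
      _ ≤ ((m:ℝ)+1+1)^2 * x^2 := by nlinarith [sq_nonneg x, Nat.cast_nonneg (α := ℝ) m]

lemma Nbound (hpnn : ∀ k, 0 ≤ p k) (hpsum : ∑' k, p k = 1)
    (hS : Summable fun k : ℕ => (k:ℝ)^2 * p k) {x : ℝ} (hx : x ∈ Ioo (0:ℝ) 1) :
    |x * rder p (1-x) + rho p (1-x) - 1| ≤ (∑' k : ℕ, (k:ℝ)^2 * p k) * x^2 := by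
  set u : ℝ := 1 - x with hu
  have hu0 : 0 < u := by simp only [hu]; linarith [hx.2]
  have hu1 : u < 1 := by simp only [hu]; linarith [hx.1]
  have habs : |u| < 1 := by rw [abs_of_pos hu0]; exact hu1
  have h1 : Summable (fun k : ℕ => (k:ℝ) * p k * u ^ (k-1)) := summable_rder hpnn hpsum habs
  have h2 : Summable (fun k : ℕ => p k * u ^ k) := summable_rho hpnn hpsum habs.le
  have h3 : Summable p := psummable hpsum
  have h1' : Summable (fun k : ℕ => x * ((k:ℝ) * p k * u ^ (k-1))) := h1.mul_left x
  have key : x * rder p u + rho p u - 1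
      = ∑' k : ℕ, (x * ((k:ℝ) * p k * u ^ (k-1)) + p k * u ^ k - p k) := by
    rw [Summable.tsum_sub (h1'.add h2) h3, Summable.tsum_add h1' h2, tsum_mul_left, ← hpsum]
    rfl
  rw [key]
  have hbound : ∀ k : ℕ, |x * ((k:ℝ) * p k * u ^ (k-1)) + p k * u ^ k - p k|
      ≤ (k:ℝ)^2 * p k * x^2 := by
    intro k
    rcases k with _ | m
    · simp
    · have : x * ((↑(m+1):ℝ) * p (m+1) * u ^ (m+1-1)) + p (m+1) * u ^ (m+1) - p (m+1)
          = p (m+1) * ((1-x)^(m+1) - 1 + ((m:ℝ)+1) * x * (1-x)^m) := by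
        simp only [Nat.add_sub_cancel, hu]
        push_cast
        ring
      rw [this, abs_mul, abs_of_nonneg (hpnn _)]
      calc p (m+1) * |(1-x)^(m+1) - 1 + ((m:ℝ)+1) * x * (1-x)^m|
          ≤ p (m+1) * (((m:ℝ)+1)^2 * x^2) :=
            mul_le_mul_of_nonneg_left (Qbound m hx.1.le hx.2.le) (hpnn _)
        _ = (↑(m+1):ℝ)^2 * p (m+1) * x^2 := by push_cast; ring
  have hSx : Summable (fun k : ℕ => (k:ℝ)^2 * p k * x^2) := hS.mul_right _
  calc |∑' k : ℕ, (x * ((k:ℝ) * p k * u ^ (k-1)) + p k * u ^ k - p k)|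
      ≤ ∑' k : ℕ, |x * ((k:ℝ) * p k * u ^ (k-1)) + p k * u ^ k - p k| := by
        have hs : Summable (fun k : ℕ => |x * ((k:ℝ) * p k * u ^ (k-1)) + p k * u ^ k - p k|) :=
          Summable.of_nonneg_of_le (fun k => abs_nonneg _) hbound (hS.mul_right _)
        simpa [Real.norm_eq_abs] using norm_tsum_le_tsum_norm (f := fun k : ℕ =>
          x * ((k:ℝ) * p k * u ^ (k-1)) + p k * u ^ k - p k) (by simpa [Real.norm_eq_abs] using hs)
    _ ≤ ∑' k : ℕ, (k:ℝ)^2 * p k * x^2 := by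
        apply Summable.tsum_le_tsum hbound _ hSx
        apply Summable.of_nonneg_of_le (fun k => abs_nonneg _) hbound hSx
    _ = (∑' k : ℕ, (k:ℝ)^2 * p k) * x^2 := by rw [← tsum_mul_right]

lemma part4 (hpnn : ∀ k, 0 ≤ p k) (hp0 : p 0 = 0) (hpsum : ∑' k, p k = 1)
    (hS : Summable fun k : ℕ => (k:ℝ)^2 * p k) :
    (fun x : ℝ => psi p (1 - x) - (1 - hfun p (1 - x) - x)) =o[𝓝[>] 0] (fun x : ℝ => x) := by
  set S : ℝ := ∑' k : ℕ, (k:ℝ)^2 * p k with hSdef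
  have hS0 : 0 ≤ S := tsum_nonneg (fun k => mul_nonneg (by positivity) (hpnn k))
  have hr12 : 0 < rder p (1/2) :=
    rder_pos hpnn hp0 hpsum ⟨by norm_num, by norm_num⟩
  set C : ℝ := S / rder p (1/2) with hCdef
  have hC0 : 0 ≤ C := div_nonneg hS0 hr12.le
  have hDbound : ∀ x ∈ Ioo (0:ℝ) (1/2),
      |psi p (1-x) - (1 - hfun p (1-x) - x)| ≤ C * (x^2 * |Real.log x|) := by
    intro x hx
    have hu : (1-x) ∈ Ioo (0:ℝ) 1 := ⟨by linarith [hx.2], by linarith [hx.1]⟩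
    have habs : |1-x| < 1 := by rw [abs_of_pos hu.1]; exact hu.2
    have hr : 0 < rder p (1-x) := rder_pos hpnn hp0 hpsum hu
    have hr2 : rder p (1/2) ≤ rder p (1-x) :=
      rder_mono hpnn hpsum (by norm_num) (by linarith [hx.2]) hu.2
    have hlog : Real.log (1 - (1-x)) = Real.log x := by norm_num
    have hD : psi p (1-x) - (1 - hfun p (1-x) - x)
        = Real.log x * ((x * rder p (1-x) + rho p (1-x) - 1) / rder p (1-x)) := by
      rw [psi, hfun, deriv_rho hpnn hpsum habs, hlog]
      field_simp
      ring
    rw [hD, abs_mul]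
    have hN := Nbound hpnn hpsum hS (x := x) ⟨hx.1, by linarith [hx.2]⟩
    have habs2 : |(x * rder p (1-x) + rho p (1-x) - 1) / rder p (1-x)|
        ≤ (S * x^2) / rder p (1/2) := by
      rw [abs_div, abs_of_pos hr]
      exact div_le_div₀ (by positivity) hN hr12 hr2
    calc |Real.log x| * |(x * rder p (1-x) + rho p (1-x) - 1) / rder p (1-x)|
        ≤ |Real.log x| * ((S * x^2) / rder p (1/2)) :=
          mul_le_mul_of_nonneg_left habs2 (abs_nonneg _)
      _ = C * (x^2 * |Real.log x|) := by rw [hCdef]; ring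
  have h1 : Tendsto (fun x : ℝ => Real.log x * x) (𝓝[>] 0) (𝓝 0) := by
    have h := tendsto_log_mul_rpow_nhdsGT_zero (r := 1) zero_lt_one
    simpa [Real.rpow_one] using h
  have h2 : Tendsto (fun x : ℝ => |Real.log x * x|) (𝓝[>] 0) (𝓝 0) := by
    simpa using h1.abs
  have htend : Tendsto (fun x : ℝ => C * (x * |Real.log x|)) (𝓝[>] 0) (𝓝 0) := by
    have h3 : Tendsto (fun x : ℝ => C * |Real.log x * x|) (𝓝[>] 0) (𝓝 0) := by
      simpa using h2.const_mul C
    apply h3.congr'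
    filter_upwards [self_mem_nhdsWithin] with x hx
    have hx0 : 0 < x := hx
    rw [abs_mul, abs_of_pos hx0]
    ring
  rw [isLittleO_iff]
  intro ε hε
  have hev1 : ∀ᶠ x in 𝓝[>] (0:ℝ), x ∈ Ioo (0:ℝ) (1/2) :=
    Ioo_mem_nhdsGT_of_mem ⟨le_refl 0, by norm_num⟩
  have hev2 : ∀ᶠ x in 𝓝[>] (0:ℝ), C * (x * |Real.log x|) < ε :=
    htend.eventually_lt_const hε
  filter_upwards [hev1, hev2, self_mem_nhdsWithin] with x hx1 hx2 hx3
  have hx0 : (0:ℝ) < x := hx3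
  rw [Real.norm_eq_abs, Real.norm_eq_abs, abs_of_pos hx0]
  calc |psi p (1-x) - (1 - hfun p (1-x) - x)| ≤ C * (x^2 * |Real.log x|) := hDbound x hx1
    _ = (C * (x * |Real.log x|)) * x := by ring
    _ ≤ ε * x := mul_le_mul_of_nonneg_right hx2.le hx0.le

end basics

theorem stmt17 (p : ℕ → ℝ) (hpnn : ∀ k, 0 ≤ p k) (hp0 : p 0 = 0)
    (hpsum : ∑' k, p k = 1) :
    (∀ x ∈ Set.Ioo (0 : ℝ) 1,
      deriv (hfun p) x = -(deriv (psi p) x) / rho p x) ∧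
    (∀ x ∈ Set.Ioo (0 : ℝ) 1,
      (0 < deriv (psi p) x ↔ deriv (hfun p) x < 0) ∧
      (deriv (psi p) x < 0 ↔ 0 < deriv (hfun p) x)) ∧
    (∀ x ∈ Set.Ioo (0 : ℝ) 1, (IsLocalMin (hfun p) x ↔ IsLocalMax (psi p) x)) ∧
    (Summable (fun k : ℕ => (k : ℝ) ^ 2 * p k) →
      (fun x : ℝ => psi p (1 - x) - (1 - hfun p (1 - x) - x)) =o[𝓝[>] 0]
        (fun x : ℝ => x)) := by
  exact ⟨fun x hx => part1_s17 hpnn hp0 hpsum hx, fun x hx => part2_s17 hpnn hp0 hpsum hx,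
    fun x hx => part3_s17 hpnn hp0 hpsum hx, fun hS => part4 hpnn hp0 hpsum hS⟩
end

section
/- Let W be a random variable taking values in ℕ with probability generating function ρ(s) = E[s^W], satisfying P[W ≥ 3] = 1 and E[W²] < ∞. Then ᾱ_ρ ≤ 1, where ᾱ_ρ = inf{α > α♯_ρ : ψ(g*(α)) < 0}, with ψ(x) = x + (1 + ρ(x)/ρ′(x) − x) log(1−x), h(x) = −log(1−x)/ρ′(x), α♯_ρ = inf_{x∈(0,1)} h(x), and g*(α) = sup{x ∈ (0,1) : h(x) ≤ α} (with the convention sup ∅ = 0). -/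
open Filter Topology Set
set_option linter.unusedSectionVars false
set_option linter.unusedVariables false

noncomputable def Dfun (p : ℕ → ℝ) (x : ℝ) : ℝ := ∑' k, p k * ((k : ℝ) * x ^ (k - 1))

section basics
variable {p : ℕ → ℝ} (hpnn : ∀ k, 0 ≤ p k)
    (hge3 : ∀ k, k < 3 → p k = 0) (hpsum : ∑' k, p k = 1)
    (hmom2 : Summable (fun k : ℕ => (k : ℝ) ^ 2 * p k))

include hpnn hmom2 in
lemma sum_q : Summable (fun k : ℕ => (k : ℝ) * p k) := by
  apply hmom2.of_nonneg_of_le (fun k => mul_nonneg (Nat.cast_nonneg k) (hpnn k))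
  intro k
  rcases Nat.eq_zero_or_pos k with h | h
  · simp [h]
  · have h1 : (1:ℝ) ≤ (k:ℝ) := by exact_mod_cast h
    have : (k:ℝ) ≤ (k:ℝ)^2 := by nlinarith
    exact mul_le_mul_of_nonneg_right this (hpnn k)

include hpnn hge3 hmom2 in
lemma sum_p : Summable p := by
  apply (sum_q hpnn hmom2).of_nonneg_of_le hpnn
  intro k
  rcases Nat.eq_zero_or_pos k with h | h
  · simp [h, hge3 0 (by norm_num)]
  · have h1 : (1:ℝ) ≤ (k:ℝ) := by exact_mod_cast h
    calc p k = 1 * p k := by ring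
      _ ≤ (k:ℝ) * p k := mul_le_mul_of_nonneg_right h1 (hpnn k)

include hpnn hge3 hpsum hmom2 in
lemma rho_hasDerivAt {x : ℝ} (hx : x ∈ Ioo (-1:ℝ) 1) :
    HasDerivAt (rho p) (Dfun p x) x := by
  have habs : |x| < 1 := abs_lt.2 ⟨hx.1, hx.2⟩
  refine hasDerivAt_tsum_of_isPreconnected (sum_q hpnn hmom2) isOpen_Ioo
      (isPreconnected_Ioo) (y₀ := 0) (t := Ioo (-1:ℝ) 1)
      (fun n y _ => ((hasDerivAt_pow n y).const_mul (p n)))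
      ?_ (by norm_num) ?_ hx
  · intro n y hy
    have hy1 : |y| ≤ 1 := le_of_lt (abs_lt.2 ⟨hy.1, hy.2⟩)
    have : |p n * ((n:ℝ) * y ^ (n-1))| = p n * (n:ℝ) * |y| ^ (n-1) := by
      rw [abs_mul, abs_mul, abs_pow, abs_of_nonneg (hpnn n), Nat.abs_cast, mul_assoc]
    rw [Real.norm_eq_abs, this]
    calc p n * (n:ℝ) * |y| ^ (n-1) ≤ p n * (n:ℝ) * 1 := by
          exact mul_le_mul_of_nonneg_left (pow_le_one₀ (abs_nonneg _) hy1)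
            (mul_nonneg (hpnn n) (Nat.cast_nonneg n))
      _ = (n:ℝ) * p n := by ring
  · apply (sum_p hpnn hge3 hmom2).of_nonneg_of_le
      (fun k => mul_nonneg (hpnn k) (pow_nonneg le_rfl k))
    intro k
    rcases Nat.eq_zero_or_pos k with h | h
    · simp [h]
    · rw [zero_pow (Nat.pos_iff_ne_zero.mp h), mul_zero]
      exact hpnn k


include hpnn hge3 hpsum hmom2 in
lemma deriv_rho_eq {x : ℝ} (hx : x ∈ Ioo (-1:ℝ) 1) : deriv (rho p) x = Dfun p x :=
  (rho_hasDerivAt hpnn hge3 hpsum hmom2 hx).deriv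

include hpnn hge3 hmom2 in
lemma rho_contOn : ContinuousOn (rho p) (Icc (-1:ℝ) 1) := by
  apply continuousOn_tsum (fun i => (continuous_const.mul (continuous_pow i)).continuousOn)
    (sum_p hpnn hge3 hmom2)
  intro n x hx
  have hx1 : |x| ≤ 1 := abs_le.2 ⟨hx.1, hx.2⟩
  simp only [Pi.mul_apply]
  rw [Real.norm_eq_abs, abs_mul, abs_of_nonneg (hpnn n), abs_pow]
  calc p n * |x| ^ n ≤ p n * 1 :=
        mul_le_mul_of_nonneg_left (pow_le_one₀ (abs_nonneg _) hx1) (hpnn n)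
    _ = p n := by ring

include hpnn hmom2 in
lemma D_contOn : ContinuousOn (Dfun p) (Icc (-1:ℝ) 1) := by
  apply continuousOn_tsum
    (fun i => (continuous_const.mul (continuous_const.mul (continuous_pow (i-1)))).continuousOn)
    (sum_q hpnn hmom2)
  intro n x hx
  have hx1 : |x| ≤ 1 := abs_le.2 ⟨hx.1, hx.2⟩
  have : |p n * ((n:ℝ) * x ^ (n-1))| = p n * (n:ℝ) * |x| ^ (n-1) := by
    rw [abs_mul, abs_mul, abs_pow, abs_of_nonneg (hpnn n), Nat.abs_cast, mul_assoc]
  simp only [Pi.mul_apply]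
  rw [Real.norm_eq_abs, this]
  calc p n * (n:ℝ) * |x| ^ (n-1) ≤ p n * (n:ℝ) * 1 :=
        mul_le_mul_of_nonneg_left (pow_le_one₀ (abs_nonneg _) hx1)
          (mul_nonneg (hpnn n) (Nat.cast_nonneg n))
    _ = (n:ℝ) * p n := by ring

include hge3 in
lemma rho_zero : rho p 0 = 0 := by
  have : ∀ k : ℕ, p k * (0:ℝ) ^ k = 0 := by
    intro k
    rcases Nat.eq_zero_or_pos k with h | h
    · simp [h, hge3 0 (by norm_num)]
    · simp [zero_pow (Nat.pos_iff_ne_zero.mp h)]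
  simp [rho, this]

include hpsum in
lemma rho_one : rho p 1 = 1 := by simp [rho, hpsum]

include hpnn hge3 hpsum in
lemma exists_supp : ∃ K : ℕ, 3 ≤ K ∧ 0 < p K := by
  by_contra h
  push_neg at h
  have : ∀ k, p k = 0 := by
    intro k
    rcases lt_or_ge k 3 with hk | hk
    · exact hge3 k hk
    · exact le_antisymm (h k hk) (hpnn k)
  simp [this] at hpsum

include hpnn hge3 hpsum hmom2 in
lemma D_pos {x : ℝ} (hx : x ∈ Ioo (0:ℝ) 1) : 0 < Dfun p x := by
  obtain ⟨K, hK3, hKpos⟩ := exists_supp hpnn hge3 hpsum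
  have hsum : Summable (fun k : ℕ => p k * ((k:ℝ) * x ^ (k-1))) := by
    apply (sum_q hpnn hmom2).of_nonneg_of_le
      (fun k => mul_nonneg (hpnn k) (mul_nonneg (Nat.cast_nonneg k) (pow_nonneg hx.1.le _)))
    intro k
    calc p k * ((k:ℝ) * x ^ (k-1)) ≤ p k * ((k:ℝ) * 1) := by
          apply mul_le_mul_of_nonneg_left _ (hpnn k)
          exact mul_le_mul_of_nonneg_left (pow_le_one₀ hx.1.le hx.2.le) (Nat.cast_nonneg k)
      _ = (k:ℝ) * p k := by ring
  have hterm : 0 < p K * ((K:ℝ) * x ^ (K-1)) := by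
    apply mul_pos hKpos
    apply mul_pos (by exact_mod_cast lt_of_lt_of_le (by norm_num) hK3)
    exact pow_pos hx.1 _
  calc (0:ℝ) < p K * ((K:ℝ) * x ^ (K-1)) := hterm
    _ ≤ Dfun p x := Summable.le_tsum hsum K (fun j _ =>
        mul_nonneg (hpnn j) (mul_nonneg (Nat.cast_nonneg j) (pow_nonneg hx.1.le _)))

include hpnn hmom2 in
lemma D_le {x : ℝ} (hx : x ∈ Icc (0:ℝ) 1) : Dfun p x ≤ ∑' k : ℕ, (k:ℝ) * p k := by
  have hsum : Summable (fun k : ℕ => p k * ((k:ℝ) * x ^ (k-1))) := by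
    apply (sum_q hpnn hmom2).of_nonneg_of_le
      (fun k => mul_nonneg (hpnn k) (mul_nonneg (Nat.cast_nonneg k) (pow_nonneg hx.1 _)))
    intro k
    calc p k * ((k:ℝ) * x ^ (k-1)) ≤ p k * ((k:ℝ) * 1) := by
          apply mul_le_mul_of_nonneg_left _ (hpnn k)
          exact mul_le_mul_of_nonneg_left (pow_le_one₀ hx.1 hx.2) (Nat.cast_nonneg k)
      _ = (k:ℝ) * p k := by ring
  apply Summable.tsum_le_tsum _ hsum (sum_q hpnn hmom2)
  intro k
  calc p k * ((k:ℝ) * x ^ (k-1)) ≤ p k * ((k:ℝ) * 1) := by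
        apply mul_le_mul_of_nonneg_left _ (hpnn k)
        exact mul_le_mul_of_nonneg_left (pow_le_one₀ hx.1 hx.2) (Nat.cast_nonneg k)
    _ = (k:ℝ) * p k := by ring


include hpnn hge3 hpsum hmom2 in
lemma int_lemma (α x₀ : ℝ) (hα : 0 < α) (hx0 : 0 ≤ x₀) (hx1 : x₀ < 1)
    (hpt : ∀ x ∈ Ioo x₀ 1, α * Dfun p x < -Real.log (1 - x)) :
    α * (1 - rho p x₀) < 1 - ((1 - x₀) * Real.log (1 - x₀) + x₀) := by
  set Φ : ℝ → ℝ := fun x => (1 - x) * Real.log (1 - x) + x with hΦ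
  set c := (x₀ + 1) / 2 with hc
  have hc1 : c < 1 := by rw [hc]; linarith
  have hc0 : x₀ < c := by rw [hc]; linarith
  have hsub : ∀ a b : ℝ, x₀ ≤ a → b < 1 → Icc a b ⊆ Ioo (-1:ℝ) 1 := by
    intro a b ha hb x hx
    exact ⟨by linarith [hx.1], by linarith [hx.2]⟩
  have ftcD : ∀ a b, x₀ ≤ a → a ≤ b → b < 1 →
      (∫ x in a..b, Dfun p x) = rho p b - rho p a := by
    intro a b ha hab hb
    apply intervalIntegral.integral_eq_sub_of_hasDerivAt
    · intro x hx
      rw [uIcc_of_le hab] at hx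
      exact rho_hasDerivAt hpnn hge3 hpsum hmom2 (hsub a b ha hb hx)
    · apply ContinuousOn.intervalIntegrable
      apply (D_contOn hpnn hmom2).mono
      rw [uIcc_of_le hab]
      exact (hsub a b ha hb).trans Ioo_subset_Icc_self
  have hlogcont : ∀ a b : ℝ, b < 1 → ContinuousOn (fun x => -Real.log (1-x)) (Icc a b) := by
    intro a b hb
    apply ContinuousOn.neg
    apply ContinuousOn.log ((continuous_const.sub continuous_id).continuousOn)
    intro x hx
    have : x < 1 := lt_of_le_of_lt hx.2 hb
    simp only [Pi.sub_apply, id_eq]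
    exact ne_of_gt (by linarith)
  have hPhiDeriv : ∀ x : ℝ, x < 1 → HasDerivAt Φ (-Real.log (1-x)) x := by
    intro x hx
    have h1 : (1:ℝ) - x ≠ 0 := ne_of_gt (by linarith)
    have d1 : HasDerivAt (fun y : ℝ => 1 - y) (-1) x := by
      simpa using (hasDerivAt_id x).const_sub 1
    have d2 : HasDerivAt (fun y : ℝ => Real.log (1 - y)) (-1 / (1-x)) x := d1.log h1
    have d3 : HasDerivAt (fun y : ℝ => (1-y) * Real.log (1-y))
        ((-1) * Real.log (1-x) + (1-x) * (-1/(1-x))) x := d1.mul d2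
    have d4 := d3.add (hasDerivAt_id x)
    refine d4.congr_deriv ?_
    rw [mul_div_assoc', mul_neg_one, neg_div, div_self h1]
    ring
  have ftcP : ∀ a b : ℝ, a ≤ b → b < 1 → (∫ x in a..b, -Real.log (1-x)) = Φ b - Φ a := by
    intro a b hab hb
    apply intervalIntegral.integral_eq_sub_of_hasDerivAt
    · intro x hx
      rw [uIcc_of_le hab] at hx
      exact hPhiDeriv x (lt_of_le_of_lt hx.2 hb)
    · apply ContinuousOn.intervalIntegrable
      rw [uIcc_of_le hab]
      exact hlogcont a b hb
  have hstrict : α * (rho p c - rho p x₀) < Φ c - Φ x₀ := by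
    have h1 : (∫ x in x₀..c, α * Dfun p x) < ∫ x in x₀..c, -Real.log (1-x) := by
      apply intervalIntegral.integral_lt_integral_of_continuousOn_of_le_of_exists_lt hc0
      · exact continuousOn_const.mul ((D_contOn hpnn hmom2).mono
          ((hsub x₀ c le_rfl hc1).trans Ioo_subset_Icc_self))
      · exact hlogcont x₀ c hc1
      · intro x hx
        exact (hpt x ⟨hx.1, lt_of_le_of_lt hx.2 hc1⟩).le
      · exact ⟨c, ⟨hc0.le, le_rfl⟩, hpt c ⟨hc0, hc1⟩⟩
    rw [intervalIntegral.integral_const_mul, ftcD x₀ c le_rfl hc0.le hc1,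
      ftcP x₀ c hc0.le hc1] at h1
    exact h1
  set δ := (Φ c - Φ x₀) - α * (rho p c - rho p x₀) with hδdef
  have hδ : 0 < δ := by rw [hδdef]; linarith
  have key : ∀ y ∈ Ioo c 1, α * (rho p y - rho p x₀) + δ ≤ Φ y - Φ x₀ := by
    intro y hy
    have h2 : α * (rho p y - rho p c) ≤ Φ y - Φ c := by
      have h3 := intervalIntegral.integral_mono_on (f := fun x => α * Dfun p x)
        (g := fun x => -Real.log (1-x)) (μ := MeasureTheory.volume) hy.1.le
        ((continuousOn_const.mul ((D_contOn hpnn hmom2).mono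
          ((hsub c y hc0.le hy.2).trans Ioo_subset_Icc_self))).intervalIntegrable_of_Icc hy.1.le)
        ((hlogcont c y hy.2).intervalIntegrable_of_Icc hy.1.le)
        (fun x hx => (hpt x ⟨lt_of_lt_of_le hc0 hx.1, lt_of_le_of_lt hx.2 hy.2⟩).le)
      rw [intervalIntegral.integral_const_mul, ftcD c y hc0.le hy.1.le hy.2,
        ftcP c y hy.1.le hy.2] at h3
      exact h3
    have := hstrict
    rw [hδdef]
    linarith
  have hne : (𝓝[Ioo c 1] (1:ℝ)).NeBot := by
    rw [← mem_closure_iff_nhdsWithin_neBot, closure_Ioo (ne_of_lt hc1)]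
    exact ⟨hc1.le, le_rfl⟩
  have hΦcont : Continuous Φ := by
    have h2 : Continuous fun x : ℝ => (1-x) * Real.log (1-x) :=
      Real.continuous_mul_log.comp (continuous_const.sub continuous_id)
    exact h2.add continuous_id
  have hΦtend : Tendsto Φ (𝓝[Ioo c 1] (1:ℝ)) (𝓝 (Φ 1)) :=
    (hΦcont.tendsto 1).mono_left nhdsWithin_le_nhds
  have hrtend : Tendsto (rho p) (𝓝[Ioo c 1] (1:ℝ)) (𝓝 1) := by
    have h1 : ContinuousWithinAt (rho p) (Icc (-1:ℝ) 1) 1 :=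
      (rho_contOn hpnn hge3 hmom2) 1 ⟨by norm_num, le_rfl⟩
    have h2 : ContinuousWithinAt (rho p) (Ioo c 1) 1 :=
      h1.mono (fun x hx => ⟨by linarith [hx.1], hx.2.le⟩)
    have := h2.tendsto
    rwa [rho_one hpsum] at this
  have final : α * (1 - rho p x₀) + δ ≤ Φ 1 - Φ x₀ := by
    apply le_of_tendsto_of_tendsto
      (f := fun y => α * (rho p y - rho p x₀) + δ) (g := fun y => Φ y - Φ x₀)
      (b := 𝓝[Ioo c 1] (1:ℝ))
    · exact ((hrtend.sub tendsto_const_nhds).const_mul α).add tendsto_const_nhds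
    · exact hΦtend.sub tendsto_const_nhds
    · exact eventually_mem_nhdsWithin.mono (fun y hy => key y hy)
  have hΦ1 : Φ 1 = 1 := by simp [hΦ]
  rw [hΦ1] at final
  have : α * (1 - rho p x₀) < 1 - Φ x₀ := by linarith
  simpa [hΦ] using this


include hpnn hge3 hpsum hmom2 in
lemma sharp_aux : ∃ x ∈ Ioo (0:ℝ) 1, -Real.log (1-x) / Dfun p x ≤ 1 := by
  by_contra hcon
  push_neg at hcon
  have hpt : ∀ x ∈ Ioo (0:ℝ) 1, 1 * Dfun p x < -Real.log (1-x) := by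
    intro x hx
    have h2 := D_pos hpnn hge3 hpsum hmom2 hx
    have h1 := hcon x hx
    have h3 := (lt_div_iff₀ h2).1 h1
    linarith
  have := int_lemma hpnn hge3 hpsum hmom2 1 0 one_pos le_rfl one_pos hpt
  rw [rho_zero hge3] at this
  norm_num at this

end basics

/-- `α♯_ρ = inf_{x ∈ (0,1)} h(x)`. -/
noncomputable def alphaSharp (p : ℕ → ℝ) : ℝ := sInf (hfun p '' Set.Ioo 0 1)

/-- `g*(α) = sup {x ∈ (0,1) : h(x) ≤ α}`, with `sup ∅ = 0` (the convention for
`sSup` of the empty set in `ℝ`). -/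
noncomputable def gstar (p : ℕ → ℝ) (α : ℝ) : ℝ :=
  sSup {x : ℝ | x ∈ Set.Ioo (0 : ℝ) 1 ∧ hfun p x ≤ α}

/-- `ᾱ_ρ = inf {α > α♯_ρ : ψ(g*(α)) < 0}`. -/
noncomputable def alphaBar (p : ℕ → ℝ) : ℝ :=
  sInf {α : ℝ | alphaSharp p < α ∧ psi p (gstar p α) < 0}

theorem stmt19 (p : ℕ → ℝ) (hpnn : ∀ k, 0 ≤ p k)
    (hge3 : ∀ k, k < 3 → p k = 0) (hpsum : ∑' k, p k = 1)
    (hmom2 : Summable (fun k : ℕ => (k : ℝ) ^ 2 * p k)) :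
    alphaBar p ≤ 1 := by
  have hD : ∀ x ∈ Ioo (0:ℝ) 1, deriv (rho p) x = Dfun p x := fun x hx =>
    deriv_rho_eq hpnn hge3 hpsum hmom2 ⟨by linarith [hx.1], hx.2⟩
  have hfun_eq : ∀ x ∈ Ioo (0:ℝ) 1, hfun p x = -Real.log (1-x) / Dfun p x := by
    intro x hx
    rw [hfun, hD x hx]
  have hlognn : ∀ x ∈ Ioo (0:ℝ) 1, 0 ≤ -Real.log (1-x) := by
    intro x hx
    have := Real.log_nonpos (x := 1 - x) (by linarith [hx.2]) (by linarith [hx.1])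
    linarith
  have hfun_nonneg : ∀ x ∈ Ioo (0:ℝ) 1, 0 ≤ hfun p x := by
    intro x hx
    rw [hfun_eq x hx]
    exact div_nonneg (hlognn x hx) (D_pos hpnn hge3 hpsum hmom2 hx).le
  have hBdd : BddBelow (hfun p '' Ioo 0 1) := by
    refine ⟨0, fun y hy => ?_⟩
    obtain ⟨x, hx, rfl⟩ := hy
    exact hfun_nonneg x hx
  have hsharp_le : alphaSharp p ≤ 1 := by
    obtain ⟨x, hx, hle⟩ := sharp_aux hpnn hge3 hpsum hmom2
    calc alphaSharp p ≤ hfun p x := csInf_le hBdd ⟨x, hx, rfl⟩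
      _ ≤ 1 := by rw [hfun_eq x hx]; exact hle
  have hmem : ∀ α : ℝ, max (alphaSharp p) 1 < α →
      alphaSharp p < α ∧ psi p (gstar p α) < 0 := by
    intro α hαgt
    have hα1 : 1 < α := lt_of_le_of_lt (le_max_right _ _) hαgt
    have hαs : alphaSharp p < α := lt_of_le_of_lt (le_max_left _ _) hαgt
    set A := {x : ℝ | x ∈ Ioo (0:ℝ) 1 ∧ hfun p x ≤ α} with hA
    obtain ⟨v, hv, hvlt⟩ := exists_lt_of_csInf_lt
      (Set.Nonempty.image _ ⟨(1:ℝ)/2, by norm_num⟩) hαs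
    obtain ⟨x₁, hx₁, rfl⟩ := hv
    have hx₁A : x₁ ∈ A := ⟨hx₁, hvlt.le⟩
    have hAbdd : BddAbove A := ⟨1, fun x hx => hx.1.2.le⟩
    set xs := sSup A with hxs
    have hx1le : x₁ ≤ xs := le_csSup hAbdd hx₁A
    set m := ∑' k : ℕ, (k:ℝ) * p k with hm
    have hub : ∀ x ∈ A, x ≤ 1 - Real.exp (-(α * m)) := by
      intro x hx
      have hDp := D_pos hpnn hge3 hpsum hmom2 hx.1
      have hDm := D_le hpnn hmom2 ⟨hx.1.1.le, hx.1.2.le⟩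
      have h1 : -Real.log (1-x) ≤ α * Dfun p x := by
        have := hx.2
        rw [hfun_eq x hx.1] at this
        exact (div_le_iff₀ hDp).1 this
      have h2 : -Real.log (1-x) ≤ α * m :=
        le_trans h1 (mul_le_mul_of_nonneg_left hDm (by linarith))
      have h3 : Real.exp (-(α*m)) ≤ Real.exp (Real.log (1-x)) :=
        Real.exp_le_exp.2 (by linarith)
      rw [Real.exp_log (by linarith [hx.1.2] : (0:ℝ) < 1 - x)] at h3
      linarith
    have hxslt1 : xs < 1 := by
      have h1 : xs ≤ 1 - Real.exp (-(α * m)) := csSup_le ⟨x₁, hx₁A⟩ hub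
      have := Real.exp_pos (-(α * m))
      linarith
    have hxsmem : xs ∈ Ioo (0:ℝ) 1 := ⟨lt_of_lt_of_le hx₁.1 hx1le, hxslt1⟩
    have hcont : ∀ x ∈ Ioo (0:ℝ) 1, ContinuousAt (hfun p) x := by
      intro x hx
      have hnbhd : Ioo (-1:ℝ) 1 ∈ 𝓝 x := isOpen_Ioo.mem_nhds ⟨by linarith [hx.1], hx.2⟩
      have heq : (fun y => -Real.log (1-y) / Dfun p y) =ᶠ[𝓝 x] hfun p := by
        filter_upwards [hnbhd] with y hy
        rw [hfun, deriv_rho_eq hpnn hge3 hpsum hmom2 hy]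
      have hDc : ContinuousAt (Dfun p) x :=
        (D_contOn hpnn hmom2).continuousAt (Filter.mem_of_superset hnbhd Ioo_subset_Icc_self)
      have hlc : ContinuousAt (fun y : ℝ => -Real.log (1-y)) x := by
        have h4 : ContinuousAt (fun y : ℝ => Real.log (1-y)) x :=
          (Real.continuousAt_log (ne_of_gt (by linarith [hx.2]) : (1:ℝ) - x ≠ 0)).comp
            ((continuous_const.sub continuous_id).continuousAt)
        exact h4.neg
      exact (hlc.div hDc (ne_of_gt (D_pos hpnn hge3 hpsum hmom2 hx))).congr heq
    have hDxs := D_pos hpnn hge3 hpsum hmom2 hxsmem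
    have hle2 : hfun p xs ≤ α := by
      by_contra hgt
      push_neg at hgt
      have hev := (hcont xs hxsmem).eventually (eventually_gt_nhds hgt)
      obtain ⟨ε, hε, hball⟩ := Metric.eventually_nhds_iff.mp hev
      obtain ⟨a, haA, hagt⟩ := exists_lt_of_lt_csSup ⟨x₁, hx₁A⟩
        (show xs - ε < xs by linarith)
      have hale : a ≤ xs := le_csSup hAbdd haA
      have : α < hfun p a := by
        apply hball
        rw [Real.dist_eq, abs_lt]
        constructor <;> linarith
      exact absurd haA.2 (not_le.2 this)
    have hge2 : α ≤ hfun p xs := by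
      by_contra hlt
      push_neg at hlt
      have hev := (hcont xs hxsmem).eventually (eventually_lt_nhds hlt)
      obtain ⟨ε, hε, hball⟩ := Metric.eventually_nhds_iff.mp hev
      set y := min (xs + ε/2) ((xs + 1)/2) with hy
      have hy1 : xs < y := lt_min (by linarith) (by linarith [hxsmem.2])
      have hy2 : y < 1 := lt_of_le_of_lt (min_le_right _ _) (by linarith [hxsmem.2])
      have hydist : dist y xs < ε := by
        rw [Real.dist_eq, abs_lt]
        have : y ≤ xs + ε/2 := min_le_left _ _
        constructor <;> linarith
      have hyA : y ∈ A := ⟨⟨lt_trans hxsmem.1 hy1, hy2⟩, (hball hydist).le⟩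
      exact absurd (le_csSup hAbdd hyA) (not_le.2 hy1)
    have heq3 : -Real.log (1 - xs) = α * Dfun p xs := by
      have h5 := le_antisymm hle2 hge2
      rw [hfun_eq xs hxsmem] at h5
      rw [div_eq_iff (ne_of_gt hDxs)] at h5
      linarith [h5]
    have hpt : ∀ x ∈ Ioo xs 1, α * Dfun p x < -Real.log (1-x) := by
      intro x hx
      have hxI : x ∈ Ioo (0:ℝ) 1 := ⟨lt_trans hxsmem.1 hx.1, hx.2⟩
      have hnotA : x ∉ A := fun hxA => absurd (le_csSup hAbdd hxA) (not_le.2 hx.1)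
      have h6 : α < hfun p x := by
        by_contra h
        push_neg at h
        exact hnotA ⟨hxI, h⟩
      rw [hfun_eq x hxI] at h6
      exact (lt_div_iff₀ (D_pos hpnn hge3 hpsum hmom2 hxI)).1 h6
    have hint := int_lemma hpnn hge3 hpsum hmom2 α xs (by linarith) hxsmem.1.le hxslt1 hpt
    refine ⟨hαs, ?_⟩
    have hgs : gstar p α = xs := rfl
    rw [hgs, psi, hD xs hxsmem]
    have hlogeq : Real.log (1 - xs) = -(α * Dfun p xs) := by linarith [heq3]
    rw [hlogeq]
    have expand : xs + (1 + rho p xs / Dfun p xs - xs) * -(α * Dfun p xs)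
        = xs - α * rho p xs - α * (1 - xs) * Dfun p xs := by
      field_simp
      ring
    rw [expand]
    have h7 : α * (1 - rho p xs) < 1 - ((1-xs) * -(α * Dfun p xs) + xs) := by
      rw [← hlogeq]
      exact hint
    nlinarith [h7, hα1]
  have hBddS : BddBelow {α : ℝ | alphaSharp p < α ∧ psi p (gstar p α) < 0} :=
    ⟨alphaSharp p, fun a ha => ha.1.le⟩
  have hfin : ∀ ε > 0, alphaBar p ≤ 1 + ε := by
    intro ε hε
    apply csInf_le hBddS
    exact hmem (1+ε) (max_lt (by linarith) (by linarith))
  exact le_of_forall_pos_le_add hfin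
end
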